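/- arXiv:2303.09903 — 5 statements merged into one kernel-verified Lean document; each statement's English description precedes it below -/
import Mathlib

section
/- Let H be a k-uniform hypergraph on n vertices and H̄ its complement. Then the largest signless Laplacian eigenvalue of H̄ satisfies q_max(H̄) ≥ (n-2)θ − q_min(H), where θ = C(n-2,k-2)/(k-1) and q_min(H) is the smallest signless Laplacian eigenvalue of H. -/
open Finset

/-- The set of hyperedges containing both `i` and `j`. -/
def edgesBetween {n : ℕ} (E : Finset (Finset (Fin n))) (i j : Fin n) :
    Finset (Finset (Fin n)) :=
  E.filter fun e => i ∈ e ∧ j ∈ e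

/-- The degree of vertex `i`: the number of hyperedges containing `i`. -/
def hdeg {n : ℕ} (E : Finset (Finset (Fin n))) (i : Fin n) : ℕ :=
  (E.filter fun e => i ∈ e).card

/-- Two (distinct) vertices are adjacent if some hyperedge contains both. -/
def Adj {n : ℕ} (E : Finset (Finset (Fin n))) (i j : Fin n) : Prop :=
  i ≠ j ∧ ∃ e ∈ E, i ∈ e ∧ j ∈ e

/-- The neighbours of a vertex. -/
noncomputable def neighbors {n : ℕ} (E : Finset (Finset (Fin n))) (i : Fin n) :
    Finset (Fin n) :=
  @Finset.filter _ (fun j => Adj E i j) (Classical.decPred _) Finset.univ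

/-- Banerjee's adjacency matrix of a hypergraph: `A i j = ∑_{e ∋ i,j} 1/(|e|-1)`. -/
noncomputable def adjMat {n : ℕ} (E : Finset (Finset (Fin n))) :
    Matrix (Fin n) (Fin n) ℝ :=
  Matrix.of fun i j =>
    if i = j then 0 else ∑ e ∈ edgesBetween E i j, 1 / ((e.card : ℝ) - 1)

/-- The signless Laplacian matrix `Q = D + A`. -/
noncomputable def signlessLap {n : ℕ} (E : Finset (Finset (Fin n))) :
    Matrix (Fin n) (Fin n) ℝ :=
  Matrix.diagonal (fun i => (hdeg E i : ℝ)) + adjMat E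

/-- Largest eigenvalue of a real matrix. -/
noncomputable def qmax {n : ℕ} (M : Matrix (Fin n) (Fin n) ℝ) : ℝ :=
  sSup (spectrum ℝ M)

/-- Smallest eigenvalue of a real matrix. -/
noncomputable def qmin {n : ℕ} (M : Matrix (Fin n) (Fin n) ℝ) : ℝ :=
  sInf (spectrum ℝ M)

/-- A hypergraph is `k`-uniform if every hyperedge has exactly `k` vertices. -/
def IsUniform {n : ℕ} (k : ℕ) (E : Finset (Finset (Fin n))) : Prop :=
  ∀ e ∈ E, e.card = k

/-- A hypergraph is connected if any two vertices are joined by a walk. -/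
def Conn {n : ℕ} (E : Finset (Finset (Fin n))) : Prop :=
  ∀ i j : Fin n, Relation.ReflTransGen (Adj E) i j

section Helpers
open Matrix
open Finset

lemma count_filter_subset {n : ℕ} (s : Finset (Fin n)) (k : ℕ) (hs : s.card ≤ k) :
    (((univ : Finset (Fin n)).powersetCard k).filter fun e => s ⊆ e).card
      = (n - s.card).choose (k - s.card) := by
  have hcard : (univ \ s : Finset (Fin n)).card = n - s.card := by
    rw [card_sdiff_of_subset (subset_univ s), card_univ, Fintype.card_fin]
  rw [← hcard, ← Finset.card_powersetCard (k - s.card) (univ \ s)]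
  refine card_bij' (fun e _ => e \ s) (fun t _ => t ∪ s) ?_ ?_ ?_ ?_
  · intro e he
    simp only [mem_filter, mem_powersetCard] at he
    obtain ⟨⟨-, hek⟩, hse⟩ := he
    rw [mem_powersetCard]
    exact ⟨sdiff_subset_sdiff (subset_univ e) le_rfl, by rw [card_sdiff_of_subset hse, hek]⟩
  · intro t ht
    rw [mem_powersetCard] at ht
    obtain ⟨hts, htc⟩ := ht
    have hdisj : Disjoint t s := disjoint_of_subset_left hts sdiff_disjoint
    simp only [mem_filter, mem_powersetCard]
    refine ⟨⟨subset_univ _, ?_⟩, subset_union_right⟩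
    rw [card_union_of_disjoint hdisj, htc]
    omega
  · intro e he
    simp only [mem_filter] at he
    exact sdiff_union_of_subset he.2
  · intro t ht
    rw [mem_powersetCard] at ht
    have hdisj : Disjoint t s := disjoint_of_subset_left ht.1 sdiff_disjoint
    rw [union_sdiff_right, sdiff_eq_self_of_disjoint hdisj]

lemma filter_sdiff' {α : Type*} [DecidableEq α] (p : α → Prop) [DecidablePred p]
    (A E : Finset α) : (A \ E).filter p = A.filter p \ E.filter p := by
  ext x; simp only [mem_filter, mem_sdiff]; tauto

lemma subE {n k : ℕ} {E : Finset (Finset (Fin n))} (hU : IsUniform k E) :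
    E ⊆ (univ : Finset (Fin n)).powersetCard k := fun e he =>
  Finset.mem_powersetCard.mpr ⟨subset_univ e, hU e he⟩

lemma deg_sum {n k : ℕ} (hk : 1 ≤ k) {E : Finset (Finset (Fin n))} (hU : IsUniform k E)
    (i : Fin n) :
    hdeg E i + hdeg ((univ : Finset (Fin n)).powersetCard k \ E) i
      = (n - 1).choose (k - 1) := by
  unfold hdeg
  rw [filter_sdiff' _ _ _]
  rw [Finset.card_sdiff_of_subset (filter_subset_filter _ (subE hU))]
  rw [Nat.add_sub_cancel' (card_le_card (filter_subset_filter _ (subE hU)))]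
  have := count_filter_subset ({i} : Finset (Fin n)) k (by simpa using hk)
  simpa [Finset.singleton_subset_iff] using this

lemma pair_sum {n k : ℕ} (hk : 2 ≤ k) {E : Finset (Finset (Fin n))} (hU : IsUniform k E)
    {i j : Fin n} (hij : i ≠ j) :
    (edgesBetween E i j).card
      + (edgesBetween ((univ : Finset (Fin n)).powersetCard k \ E) i j).card
      = (n - 2).choose (k - 2) := by
  unfold edgesBetween
  rw [filter_sdiff' _ _ _]
  rw [Finset.card_sdiff_of_subset (filter_subset_filter _ (subE hU))]
  rw [Nat.add_sub_cancel' (card_le_card (filter_subset_filter _ (subE hU)))]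
  have hc : ({i, j} : Finset (Fin n)).card = 2 := by
    rw [card_insert_of_notMem (by simpa using hij), card_singleton]
  have := count_filter_subset ({i, j} : Finset (Fin n)) k (by omega)
  rw [hc] at this
  rw [← this]
  congr 1
  apply filter_congr
  intro e _
  simp [Finset.insert_subset_iff]

lemma edgesBetween_comm {n : ℕ} (E : Finset (Finset (Fin n))) (i j : Fin n) :
    edgesBetween E i j = edgesBetween E j i := by
  unfold edgesBetween
  apply filter_congr
  intro e _
  exact and_comm

lemma herm {n : ℕ} (E : Finset (Finset (Fin n))) : (signlessLap E).IsHermitian := by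
  unfold Matrix.IsHermitian
  rw [Matrix.conjTranspose_eq_transpose_of_trivial]
  ext i j
  simp only [Matrix.transpose_apply, signlessLap, Matrix.add_apply, Matrix.diagonal_apply,
    adjMat, Matrix.of_apply]
  rw [edgesBetween_comm]
  by_cases h : i = j <;> simp [h, eq_comm]

lemma key_identity {n k : ℕ} (hk : 2 ≤ k) (E : Finset (Finset (Fin n)))
    (hU : IsUniform k E) :
    signlessLap E + signlessLap ((univ : Finset (Fin n)).powersetCard k \ E)
      = (((n : ℝ) - 2) * (((n - 2).choose (k - 2) : ℝ) / ((k : ℝ) - 1))) •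
          (1 : Matrix (Fin n) (Fin n) ℝ)
        + (((n - 2).choose (k - 2) : ℝ) / ((k : ℝ) - 1)) •
          (Matrix.of fun _ _ => (1 : ℝ)) := by
  have hk1 : ((k : ℝ) - 1) ≠ 0 := by
    have : (2:ℝ) ≤ (k:ℝ) := by exact_mod_cast hk
    linarith
  ext i j
  by_cases hij : i = j
  · subst hij
    simp only [signlessLap, Matrix.add_apply, Matrix.diagonal_apply_eq, adjMat,
      Matrix.of_apply, if_pos rfl, Matrix.smul_apply, Matrix.one_apply_eq, smul_eq_mul,
      mul_one, add_zero, if_true]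
    have hd := deg_sum (by omega : 1 ≤ k) hU i
    have hcast : (hdeg E i : ℝ) + (hdeg ((univ : Finset (Fin n)).powersetCard k \ E) i : ℝ)
        = ((n - 1).choose (k - 1) : ℝ) := by exact_mod_cast hd
    rw [hcast]
    have hn1 : 1 ≤ n := i.pos
    rcases Nat.lt_or_ge n 2 with hn2 | hn2
    · interval_cases n
      have h1 : (0 : ℕ).choose (k-1) = 0 := Nat.choose_eq_zero_of_lt (by omega)
      simp [h1]
      ring
    · have hnat : (n - 1).choose (k - 1) * (k - 1) = (n - 1) * (n - 2).choose (k - 2) := by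
        have h := Nat.add_one_mul_choose_eq (n - 2) (k - 2)
        have e1 : n - 2 + 1 = n - 1 := by omega
        have e2 : k - 2 + 1 = k - 1 := by omega
        rw [e1, e2] at h
        omega
      have hcast2 : ((n - 1).choose (k - 1) : ℝ) * ((k:ℝ) - 1)
          = ((n:ℝ) - 1) * ((n - 2).choose (k - 2) : ℝ) := by
        have e1 : ((n:ℝ) - 1) = ((n - 1 : ℕ) : ℝ) := by
          push_cast [Nat.cast_sub hn1]; ring
        have e2 : ((k:ℝ) - 1) = ((k - 1 : ℕ) : ℝ) := by
          push_cast [Nat.cast_sub (by omega : 1 ≤ k)]; ring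
        rw [e1, e2]
        exact_mod_cast hnat
      field_simp
      linarith [hcast2]
  · simp only [signlessLap, Matrix.add_apply, Matrix.diagonal_apply_ne _ hij, adjMat,
      Matrix.of_apply, if_neg hij, Matrix.smul_apply, Matrix.one_apply_ne hij, smul_eq_mul,
      mul_zero, zero_add, mul_one]
    have hs1 : ∑ e ∈ edgesBetween E i j, 1 / ((e.card : ℝ) - 1)
        = (edgesBetween E i j).card / ((k:ℝ) - 1) := by
      rw [Finset.sum_congr rfl (fun e he => by
        rw [hU e (Finset.mem_of_mem_filter e he)]), Finset.sum_const]
      simp [div_eq_mul_inv]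
    have hs2 : ∑ e ∈ edgesBetween ((univ : Finset (Fin n)).powersetCard k \ E) i j,
          1 / ((e.card : ℝ) - 1)
        = (edgesBetween ((univ : Finset (Fin n)).powersetCard k \ E) i j).card
            / ((k:ℝ) - 1) := by
      rw [Finset.sum_congr rfl (fun e he => by
        have : e ∈ (univ : Finset (Fin n)).powersetCard k \ E :=
          Finset.mem_of_mem_filter e he
        rw [(Finset.mem_powersetCard.mp (Finset.mem_sdiff.mp this).1).2]), Finset.sum_const]
      simp [div_eq_mul_inv]
    rw [hs1, hs2, ← add_div]
    congr 1
    exact_mod_cast pair_sum hk hU hij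

lemma rayleigh_le {n : ℕ} (M : Matrix (Fin n) (Fin n) ℝ) (hM : M.IsHermitian)
    (w : Fin n → ℝ) (hw : w ⬝ᵥ w = 1) : w ⬝ᵥ (M *ᵥ w) ≤ qmax M := by
  set U : Matrix (Fin n) (Fin n) ℝ := (hM.eigenvectorUnitary : Matrix (Fin n) (Fin n) ℝ)
    with hU
  have hstar : star U = Uᵀ := by
    rw [Matrix.star_eq_conjTranspose, Matrix.conjTranspose_eq_transpose_of_trivial]
  have hUU : U * star U = 1 := Matrix.mem_unitaryGroup_iff.mp hM.eigenvectorUnitary.2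
  set c : Fin n → ℝ := star U *ᵥ w with hc
  have hcvm : c = w ᵥ* U := by rw [hc, hstar, Matrix.mulVec_transpose]
  have hcc : c ⬝ᵥ c = 1 := by
    calc c ⬝ᵥ c = (w ᵥ* U) ⬝ᵥ (star U *ᵥ w) := by rw [← hcvm, hc]
    _ = w ⬝ᵥ (U *ᵥ (star U *ᵥ w)) := (dotProduct_mulVec w U _).symm
    _ = w ⬝ᵥ ((U * star U) *ᵥ w) := by rw [Matrix.mulVec_mulVec]
    _ = 1 := by rw [hUU, Matrix.one_mulVec, hw]
  have hdiag : (Matrix.diagonal (RCLike.ofReal ∘ hM.eigenvalues) : Matrix (Fin n) (Fin n) ℝ)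
      = Matrix.diagonal hM.eigenvalues := rfl
  have hform : w ⬝ᵥ (M *ᵥ w) = ∑ i, hM.eigenvalues i * (c i * c i) := by
    conv_lhs => rw [hM.spectral_theorem, Unitary.conjStarAlgAut_apply]
    rw [← hU, hdiag, ← Matrix.mulVec_mulVec, ← Matrix.mulVec_mulVec,
      dotProduct_mulVec, ← hcvm, ← hc]
    simp only [Matrix.mulVec_diagonal, dotProduct]
    exact Finset.sum_congr rfl fun i _ => by ring
  have hbdd : BddAbove (spectrum ℝ M) := (Matrix.finite_real_spectrum (A := M)).bddAbove
  have hle : ∀ i, hM.eigenvalues i ≤ qmax M := fun i =>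
    le_csSup hbdd (hM.eigenvalues_mem_spectrum_real i)
  rw [hform]
  calc ∑ i, hM.eigenvalues i * (c i * c i) ≤ ∑ i, qmax M * (c i * c i) :=
        Finset.sum_le_sum fun i _ =>
          mul_le_mul_of_nonneg_right (hle i) (mul_self_nonneg _)
  _ = qmax M * (c ⬝ᵥ c) := by rw [← Finset.mul_sum]; rfl
  _ = qmax M := by rw [hcc, mul_one]

open Matrix in
theorem stmt_1 (n k : ℕ) (hk : 2 ≤ k) (E : Finset (Finset (Fin n)))
    (hU : IsUniform k E) :
    qmax (signlessLap (Finset.univ.powersetCard k \ E)) ≥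
      ((n : ℝ) - 2) * ((((n - 2).choose (k - 2) : ℝ)) / ((k : ℝ) - 1))
        - qmin (signlessLap E) := by
  have hk2 : (2:ℝ) ≤ (k:ℝ) := by exact_mod_cast hk
  set θ : ℝ := ((n - 2).choose (k - 2) : ℝ) / ((k : ℝ) - 1) with hθdef
  have hθ : 0 ≤ θ := div_nonneg (Nat.cast_nonneg _) (by linarith)
  have hH1 := herm E
  have hH2 := herm ((Finset.univ : Finset (Fin n)).powersetCard k \ E)
  rcases Nat.eq_zero_or_pos n with hn | hn
  · subst hn
    rw [ge_iff_le]
    unfold qmax qmin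
    rw [hH1.spectrum_real_eq_range_eigenvalues, hH2.spectrum_real_eq_range_eigenvalues,
      Set.range_eq_empty, Set.range_eq_empty, Real.sSup_empty, Real.sInf_empty]
    simp only [Nat.cast_zero]
    nlinarith [hθ]
  · haveI : Nonempty (Fin n) := ⟨⟨0, hn⟩⟩
    have hmem : qmin (signlessLap E) ∈ Set.range hH1.eigenvalues := by
      unfold qmin
      rw [hH1.spectrum_real_eq_range_eigenvalues]
      exact Set.Nonempty.csInf_mem (Set.range_nonempty _) (Set.finite_range _)
    obtain ⟨i0, hi0⟩ := hmem
    set w : Fin n → ℝ := ⇑(hH1.eigenvectorBasis i0) with hwdef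
    have hww : w ⬝ᵥ w = 1 := by
      have h1 : ‖hH1.eigenvectorBasis i0‖ = 1 := hH1.eigenvectorBasis.orthonormal.1 i0
      have h2 : (inner ℝ (hH1.eigenvectorBasis i0) (hH1.eigenvectorBasis i0) : ℝ) = 1 := by
        rw [real_inner_self_eq_norm_mul_norm, h1, mul_one]
      rw [← h2]
      simp only [PiLp.inner_apply, dotProduct, RCLike.inner_apply, starRingEnd_apply, star_trivial,
        hwdef]
    have hQ1w : signlessLap E *ᵥ w = qmin (signlessLap E) • w := by
      rw [hwdef, hH1.mulVec_eigenvectorBasis, hi0]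
    have h2 : w ⬝ᵥ (signlessLap ((Finset.univ : Finset (Fin n)).powersetCard k \ E) *ᵥ w)
        ≤ qmax (signlessLap ((Finset.univ : Finset (Fin n)).powersetCard k \ E)) :=
      rayleigh_le _ hH2 w hww
    have hq1 : w ⬝ᵥ (signlessLap E *ᵥ w) = qmin (signlessLap E) := by
      rw [hQ1w, dotProduct_smul, hww, smul_eq_mul, mul_one]
    have hJ : (Matrix.of fun _ _ => (1:ℝ) : Matrix (Fin n) (Fin n) ℝ) *ᵥ w = fun _ => ∑ j, w j := by
      ext i
      simp [Matrix.mulVec, dotProduct]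
    have hsum : w ⬝ᵥ (signlessLap E *ᵥ w)
        + w ⬝ᵥ (signlessLap ((Finset.univ : Finset (Fin n)).powersetCard k \ E) *ᵥ w)
        = ((n:ℝ) - 2) * θ + θ * ((∑ j, w j) * (∑ j, w j)) := by
      calc w ⬝ᵥ (signlessLap E *ᵥ w)
            + w ⬝ᵥ (signlessLap ((Finset.univ : Finset (Fin n)).powersetCard k \ E) *ᵥ w)
          = w ⬝ᵥ ((signlessLap E
              + signlessLap ((Finset.univ : Finset (Fin n)).powersetCard k \ E)) *ᵥ w) := by
            rw [Matrix.add_mulVec, dotProduct_add]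
      _ = w ⬝ᵥ (((((n : ℝ) - 2) * θ) • (1 : Matrix (Fin n) (Fin n) ℝ)
            + θ • (Matrix.of fun _ _ => (1 : ℝ))) *ᵥ w) := by
            rw [key_identity hk E hU]
      _ = ((n:ℝ) - 2) * θ * (w ⬝ᵥ w) + θ * (w ⬝ᵥ fun _ => ∑ j, w j) := by
            rw [Matrix.add_mulVec, dotProduct_add, Matrix.smul_mulVec,
              Matrix.one_mulVec, dotProduct_smul, Matrix.smul_mulVec,
              dotProduct_smul, hJ, smul_eq_mul, smul_eq_mul]
      _ = ((n:ℝ) - 2) * θ + θ * ((∑ j, w j) * (∑ j, w j)) := by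
            rw [hww, mul_one]
            congr 1
            rw [dotProduct, Finset.sum_mul]
    have hS : 0 ≤ θ * ((∑ j, w j) * (∑ j, w j)) := mul_nonneg hθ (mul_self_nonneg _)
    rw [ge_iff_le]
    linarith [h2, hsum, hq1, hS]
end Helpers
end

section
/- Let H be a connected k-uniform hypergraph with minimum degree d_min. Then the largest signless Laplacian eigenvalue satisfies q_max(H) ≥ (d_min + sqrt(d_min² + (8/(k-1))·T_min))/2, where T_min is the minimum over vertices i of T_i = Σ_{j∼i} d_j (the 2-degree of i). -/
open Finset

section AuxHG
open Matrix
variable {n k : ℕ} {E : Finset (Finset (Fin n))}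

lemma adjMat_symm (E : Finset (Finset (Fin n))) (i j : Fin n) :
    adjMat E i j = adjMat E j i := by
  have h : edgesBetween E i j = edgesBetween E j i := by
    unfold edgesBetween
    exact Finset.filter_congr fun e _ => and_comm
  by_cases hij : i = j
  · subst hij; rfl
  · simp [adjMat, hij, Ne.symm hij, h]

lemma adjMat_entry (hU : IsUniform k E) {i j : Fin n} (hij : i ≠ j) :
    adjMat E i j = (edgesBetween E i j).card * (1 / ((k : ℝ) - 1)) := by
  simp only [adjMat, Matrix.of_apply, if_neg hij]
  rw [Finset.sum_congr rfl (fun e he => by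
    rw [hU e (Finset.mem_filter.mp he).1])]
  simp [mul_comm]

lemma adjMat_nonneg (hU : IsUniform k E) (hk : 2 ≤ k) (i j : Fin n) :
    0 ≤ adjMat E i j := by
  have hK : (0:ℝ) ≤ 1 / ((k : ℝ) - 1) := by
    have : (2:ℝ) ≤ (k:ℝ) := by exact_mod_cast hk
    apply div_nonneg zero_le_one; linarith
  by_cases hij : i = j
  · subst hij; simp [adjMat]
  · rw [adjMat_entry hU hij]
    exact mul_nonneg (Nat.cast_nonneg _) hK

lemma adjMat_ge (hU : IsUniform k E) (hk : 2 ≤ k) {i j : Fin n} (h : Adj E i j) :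
    1 / ((k : ℝ) - 1) ≤ adjMat E i j := by
  obtain ⟨hij, e, he, hie, hje⟩ := h
  rw [adjMat_entry hU hij]
  have hcard : 1 ≤ (edgesBetween E i j).card := by
    refine Finset.card_pos.mpr ⟨e, ?_⟩
    exact Finset.mem_filter.mpr ⟨he, hie, hje⟩
  have hK : (0:ℝ) ≤ 1 / ((k : ℝ) - 1) := by
    have : (2:ℝ) ≤ (k:ℝ) := by exact_mod_cast hk
    apply div_nonneg zero_le_one; linarith
  nlinarith [hK, (by exact_mod_cast hcard : (1:ℝ) ≤ ((edgesBetween E i j).card : ℝ))]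

lemma hdeg_eq_sum (E : Finset (Finset (Fin n))) (i : Fin n) :
    (hdeg E i : ℝ) = ∑ e ∈ E, (if i ∈ e then (1:ℝ) else 0) := by
  rw [hdeg, Finset.card_filter]
  push_cast
  rfl

lemma row_sum_adj (hU : IsUniform k E) (hk : 2 ≤ k) (i : Fin n) :
    ∑ j, adjMat E i j = (hdeg E i : ℝ) := by
  have hk1 : (1:ℕ) ≤ k := le_trans (by norm_num) hk
  calc ∑ j, adjMat E i j
      = ∑ j, ∑ e ∈ E, (if i ∈ e ∧ j ∈ e ∧ j ≠ i then 1 / ((k:ℝ)-1) else 0) := by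
        refine Finset.sum_congr rfl fun j _ => ?_
        by_cases hij : i = j
        · subst hij
          simp [adjMat]
        · simp only [adjMat, Matrix.of_apply, if_neg hij, edgesBetween, Finset.sum_filter]
          refine Finset.sum_congr rfl fun e he => ?_
          by_cases hmem : i ∈ e ∧ j ∈ e
          · rw [if_pos hmem, if_pos ⟨hmem.1, hmem.2, Ne.symm hij⟩, hU e he]
          · rw [if_neg hmem, if_neg (by tauto)]
    _ = ∑ e ∈ E, ∑ j, (if i ∈ e ∧ j ∈ e ∧ j ≠ i then 1 / ((k:ℝ)-1) else 0) :=
        Finset.sum_comm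
    _ = ∑ e ∈ E, (if i ∈ e then (1:ℝ) else 0) := by
        refine Finset.sum_congr rfl fun e he => ?_
        by_cases hie : i ∈ e
        · rw [if_pos hie]
          have h2 : ∀ j, (if i ∈ e ∧ j ∈ e ∧ j ≠ i then 1/((k:ℝ)-1) else 0)
              = (if j ∈ e.erase i then 1/((k:ℝ)-1) else 0) := by
            intro j
            congr 1
            simp [Finset.mem_erase, hie, and_comm]
          simp_rw [h2]
          rw [Finset.sum_ite_mem, Finset.univ_inter, Finset.sum_const,
            Finset.card_erase_of_mem hie, hU e he, nsmul_eq_mul]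
          rw [Nat.cast_sub hk1]
          push_cast
          have : ((k:ℝ) - 1) ≠ 0 := by
            have : (2:ℝ) ≤ (k:ℝ) := by exact_mod_cast hk
            linarith
          field_simp
        · rw [if_neg hie]
          refine Finset.sum_eq_zero fun j _ => ?_
          rw [if_neg (by tauto)]
    _ = (hdeg E i : ℝ) := (hdeg_eq_sum E i).symm

lemma quad_adj (hU : IsUniform k E) (x : Fin n → ℝ) :
    ∑ i, ∑ j, x i * (adjMat E i j * x j)
      = ∑ e ∈ E, ((∑ i ∈ e, x i)^2 - ∑ i ∈ e, (x i)^2) * (1 / ((k:ℝ)-1)) := by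
  calc ∑ i, ∑ j, x i * (adjMat E i j * x j)
      = ∑ i, ∑ j, ∑ e ∈ E, (if i ∈ e ∧ j ∈ e ∧ j ≠ i then x i * x j * (1/((k:ℝ)-1)) else 0) := by
        refine Finset.sum_congr rfl fun i _ => Finset.sum_congr rfl fun j _ => ?_
        by_cases hij : i = j
        · subst hij; simp [adjMat]
        · simp only [adjMat, Matrix.of_apply, if_neg hij, edgesBetween, Finset.sum_filter]
          rw [Finset.sum_mul, Finset.mul_sum]
          refine Finset.sum_congr rfl fun e he => ?_
          by_cases hmem : i ∈ e ∧ j ∈ e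
          · rw [if_pos hmem, if_pos ⟨hmem.1, hmem.2, Ne.symm hij⟩, hU e he]
            ring
          · rw [if_neg hmem, if_neg (by tauto)]
            ring
    _ = ∑ i, ∑ e ∈ E, ∑ j, (if i ∈ e ∧ j ∈ e ∧ j ≠ i then x i * x j * (1/((k:ℝ)-1)) else 0) :=
        Finset.sum_congr rfl fun i _ => Finset.sum_comm
    _ = ∑ e ∈ E, ∑ i, ∑ j, (if i ∈ e ∧ j ∈ e ∧ j ≠ i then x i * x j * (1/((k:ℝ)-1)) else 0) :=
        Finset.sum_comm
    _ = ∑ e ∈ E, ((∑ i ∈ e, x i)^2 - ∑ i ∈ e, (x i)^2) * (1 / ((k:ℝ)-1)) := by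
        refine Finset.sum_congr rfl fun e _ => ?_
        have step1 : ∀ i, ∑ j, (if i ∈ e ∧ j ∈ e ∧ j ≠ i then x i * x j * (1/((k:ℝ)-1)) else 0)
            = (if i ∈ e then x i * ((∑ j ∈ e, x j) - x i) * (1/((k:ℝ)-1)) else 0) := by
          intro i
          by_cases hie : i ∈ e
          · rw [if_pos hie]
            have h2 : ∀ j, (if i ∈ e ∧ j ∈ e ∧ j ≠ i then x i * x j * (1/((k:ℝ)-1)) else 0)
                = (if j ∈ e.erase i then x i * x j * (1/((k:ℝ)-1)) else 0) := by
              intro j; congr 1; simp [Finset.mem_erase, hie, and_comm]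
            simp_rw [h2]
            rw [Finset.sum_ite_mem, Finset.univ_inter, ← Finset.sum_mul, ← Finset.mul_sum,
              Finset.sum_erase_eq_sub hie]
          · rw [if_neg hie]
            refine Finset.sum_eq_zero fun j _ => ?_
            rw [if_neg (by tauto)]
        simp_rw [step1]
        rw [Finset.sum_ite_mem, Finset.univ_inter, ← Finset.sum_mul]
        congr 1
        simp_rw [mul_sub]
        rw [Finset.sum_sub_distrib, ← Finset.sum_mul, sq]
        simp [sq]

lemma deg_quad (E : Finset (Finset (Fin n))) (x : Fin n → ℝ) :
    ∑ i, (hdeg E i : ℝ) * (x i)^2 = ∑ e ∈ E, ∑ i ∈ e, (x i)^2 := by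
  calc ∑ i, (hdeg E i : ℝ) * (x i)^2
      = ∑ i, ∑ e ∈ E, (if i ∈ e then (x i)^2 else 0) := by
        refine Finset.sum_congr rfl fun i _ => ?_
        rw [hdeg_eq_sum E i, Finset.sum_mul]
        refine Finset.sum_congr rfl fun e _ => ?_
        by_cases hie : i ∈ e <;> simp [hie]
    _ = ∑ e ∈ E, ∑ i, (if i ∈ e then (x i)^2 else 0) := Finset.sum_comm
    _ = ∑ e ∈ E, ∑ i ∈ e, (x i)^2 := by
        refine Finset.sum_congr rfl fun e _ => ?_
        rw [Finset.sum_ite_mem, Finset.univ_inter]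

lemma signlessLap_quad (hU : IsUniform k E) (x : Fin n → ℝ) :
    x ⬝ᵥ (signlessLap E *ᵥ x)
      = ∑ e ∈ E, ((∑ i ∈ e, (x i)^2) + ((∑ i ∈ e, x i)^2 - ∑ i ∈ e, (x i)^2) * (1/((k:ℝ)-1))) := by
  have expand : x ⬝ᵥ (signlessLap E *ᵥ x)
      = ∑ i, (hdeg E i : ℝ) * (x i)^2 + ∑ i, ∑ j, x i * (adjMat E i j * x j) := by
    simp only [signlessLap, Matrix.add_mulVec, dotProduct_add]
    congr 1
    · simp only [dotProduct, Matrix.mulVec_diagonal]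
      refine Finset.sum_congr rfl fun i _ => ?_
      ring
    · simp only [dotProduct, Matrix.mulVec, Finset.mul_sum]
  rw [expand, deg_quad E x, quad_adj hU x, ← Finset.sum_add_distrib]

lemma signlessLap_isHermitian (E : Finset (Finset (Fin n))) :
    (signlessLap E).IsHermitian := by
  ext i j
  simp only [Matrix.conjTranspose_apply, signlessLap, Matrix.add_apply, star_trivial]
  rw [adjMat_symm E j i]
  congr 1
  by_cases hij : i = j
  · subst hij; rfl
  · rw [Matrix.diagonal_apply_ne _ hij, Matrix.diagonal_apply_ne _ (Ne.symm hij)]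

lemma signlessLap_posSemidef (hU : IsUniform k E) (hk : 2 ≤ k) :
    (signlessLap E).PosSemidef := by
  refine .of_dotProduct_mulVec_nonneg (signlessLap_isHermitian E) fun x => ?_
  have hx : star x = x := by funext i; simp
  rw [hx, signlessLap_quad hU x]
  refine Finset.sum_nonneg fun e _ => ?_
  have hk2 : (2:ℝ) ≤ (k:ℝ) := by exact_mod_cast hk
  have hK1 : (1:ℝ) ≤ (k:ℝ) - 1 := by linarith
  have hc0 : (0:ℝ) ≤ 1/((k:ℝ)-1) := by apply div_nonneg zero_le_one; linarith
  have hc1 : 1/((k:ℝ)-1) ≤ 1 := by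
    rw [div_le_one (by linarith)]; linarith
  have hS2 : (0:ℝ) ≤ ∑ i ∈ e, (x i)^2 := Finset.sum_nonneg fun i _ => sq_nonneg _
  have hSq : (0:ℝ) ≤ (∑ i ∈ e, x i)^2 := sq_nonneg _
  nlinarith

lemma row_sum_lap (hU : IsUniform k E) (hk : 2 ≤ k) (i : Fin n) :
    ∑ j, signlessLap E i j = 2 * (hdeg E i : ℝ) := by
  simp only [signlessLap, Matrix.add_apply, Finset.sum_add_distrib]
  rw [row_sum_adj hU hk i]
  have : ∑ j, Matrix.diagonal (fun i => (hdeg E i : ℝ)) i j = (hdeg E i : ℝ) := by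
    rw [Finset.sum_eq_single i]
    · simp
    · intro j _ hj; exact Matrix.diagonal_apply_ne' _ hj
    · simp
  rw [this]; ring

lemma weighted_row_bound (hU : IsUniform k E) (hk : 2 ≤ k) (i : Fin n) :
    (∑ l ∈ neighbors E i, (hdeg E l : ℝ)) * (1/((k:ℝ)-1))
      ≤ ∑ l, adjMat E i l * (hdeg E l : ℝ) := by
  rw [Finset.sum_mul]
  calc ∑ l ∈ neighbors E i, (hdeg E l : ℝ) * (1/((k:ℝ)-1))
      ≤ ∑ l ∈ neighbors E i, adjMat E i l * (hdeg E l : ℝ) := by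
        refine Finset.sum_le_sum fun l hl => ?_
        have hadj : Adj E i l := by
          have hl' := hl
          simp only [neighbors, Finset.mem_filter] at hl'
          exact hl'.2
        have hge := adjMat_ge hU hk hadj
        have h0 : (0:ℝ) ≤ (hdeg E l : ℝ) := Nat.cast_nonneg _
        calc (hdeg E l : ℝ) * (1/((k:ℝ)-1)) = (1/((k:ℝ)-1)) * (hdeg E l : ℝ) := mul_comm _ _
          _ ≤ adjMat E i l * (hdeg E l : ℝ) := mul_le_mul_of_nonneg_right hge h0
    _ ≤ ∑ l, adjMat E i l * (hdeg E l : ℝ) := by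
        refine Finset.sum_le_sum_of_subset_of_nonneg (Finset.subset_univ _) fun l _ _ => ?_
        exact mul_nonneg (adjMat_nonneg hU hk i l) (Nat.cast_nonneg _)

lemma sum_deg_sq (hU : IsUniform k E) (hk : 2 ≤ k) :
    ∑ i, ∑ l, adjMat E i l * (hdeg E l : ℝ) = ∑ l, (hdeg E l : ℝ)^2 := by
  rw [Finset.sum_comm]
  refine Finset.sum_congr rfl fun l _ => ?_
  rw [← Finset.sum_mul]
  have : ∑ i, adjMat E i l = (hdeg E l : ℝ) := by
    rw [Finset.sum_congr rfl fun i _ => adjMat_symm E i l]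
    exact row_sum_adj hU hk l
  rw [this, sq]

lemma conj_helper {m : ℕ} (U : Matrix (Fin m) (Fin m) ℝ) (h : star U * U = 1)
    (v w : Fin m → ℝ) :
    (U * Matrix.diagonal v * star U) * (U * Matrix.diagonal w * star U)
      = U * Matrix.diagonal (fun j => v j * w j) * star U := by
  have h' : ∀ X : Matrix (Fin m) (Fin m) ℝ, star U * (U * X) = X := fun X => by
    rw [← Matrix.mul_assoc, h, Matrix.one_mul]
  simp only [Matrix.mul_assoc, h']
  rw [← Matrix.mul_assoc (Matrix.diagonal v), Matrix.diagonal_mul_diagonal]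

end AuxHG
open Matrix

set_option maxHeartbeats 1000000 in
theorem stmt_3 (n k : ℕ) (hn : 0 < n) (hk : 2 ≤ k) (E : Finset (Finset (Fin n)))
    (hU : IsUniform k E) (hc : Conn E) :
    qmax (signlessLap E) ≥
      ((⨅ i : Fin n, (hdeg E i : ℝ)) +
        Real.sqrt ((⨅ i : Fin n, (hdeg E i : ℝ)) ^ 2 +
          8 / ((k : ℝ) - 1) *
            (⨅ i : Fin n, ∑ j ∈ neighbors E i, (hdeg E j : ℝ)))) / 2 := by
  classical
  have hn' : Nonempty (Fin n) := Fin.pos_iff_nonempty.mp hn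
  have hk2 : (2:ℝ) ≤ (k:ℝ) := by exact_mod_cast hk
  have hK1 : (1:ℝ) ≤ (k:ℝ) - 1 := by linarith
  have hK0 : (0:ℝ) < (k:ℝ) - 1 := by linarith
  set d : ℝ := ⨅ i : Fin n, (hdeg E i : ℝ) with hd
  set T : ℝ := ⨅ i : Fin n, ∑ j ∈ neighbors E i, (hdeg E j : ℝ) with hT
  have hd_le : ∀ i, d ≤ (hdeg E i : ℝ) := fun i =>
    ciInf_le (Set.Finite.bddBelow (Set.finite_range _)) i
  have hd0 : 0 ≤ d := le_ciInf fun i => Nat.cast_nonneg _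
  have hT_le : ∀ i, T ≤ ∑ j ∈ neighbors E i, (hdeg E j : ℝ) := fun i =>
    ciInf_le (Set.Finite.bddBelow (Set.finite_range _)) i
  have hT0 : 0 ≤ T := le_ciInf fun i => Finset.sum_nonneg fun j _ => Nat.cast_nonneg _
  set Q : Matrix (Fin n) (Fin n) ℝ := signlessLap E with hQdef
  have hQH : Q.IsHermitian := signlessLap_isHermitian E
  have hPSD : Q.PosSemidef := signlessLap_posSemidef hU hk
  set q : ℝ := qmax Q with hq
  set U : Matrix (Fin n) (Fin n) ℝ := (hQH.eigenvectorUnitary : Matrix (Fin n) (Fin n) ℝ) with hUdef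
  set μ : Fin n → ℝ := hQH.eigenvalues with hμdef
  have hUU : U * star U = 1 := Matrix.mem_unitaryGroup_iff.mp hQH.eigenvectorUnitary.2
  have hUU' : star U * U = 1 := Matrix.mem_unitaryGroup_iff'.mp hQH.eigenvectorUnitary.2
  have hrepQ : Q = U * Matrix.diagonal μ * star U := by
    simpa using hQH.spectral_theorem
  have rep_smul_one : ∀ c : ℝ,
      c • (1 : Matrix (Fin n) (Fin n) ℝ) = U * Matrix.diagonal (fun _ => c) * star U := by
    intro c
    calc c • (1 : Matrix (Fin n) (Fin n) ℝ)
        = c • (U * star U) := by rw [hUU]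
      _ = U * (c • (1 : Matrix (Fin n) (Fin n) ℝ)) * star U := by
          rw [Matrix.mul_smul, Matrix.smul_mul, Matrix.mul_one]
      _ = U * Matrix.diagonal (fun _ => c) * star U := by
          rw [Matrix.smul_one_eq_diagonal]
  have rep_psd : ∀ v : Fin n → ℝ, (∀ j, 0 ≤ v j) →
      (U * Matrix.diagonal v * star U).PosSemidef := fun v hv =>
    (Matrix.posSemidef_diagonal_iff.mpr hv).mul_mul_conjTranspose_same U
  -- eigenvalue facts
  have hbdd : BddAbove (spectrum ℝ Q) := (Matrix.finite_real_spectrum (A := Q)).bddAbove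
  have hμq : ∀ j, μ j ≤ q := fun j =>
    le_csSup hbdd (by rw [hQH.spectrum_real_eq_range_eigenvalues]; exact ⟨j, rfl⟩)
  have hμ0 : ∀ j, 0 ≤ μ j := fun j => hPSD.eigenvalues_nonneg j
  -- all-ones vector
  set o : Fin n → ℝ := fun _ => 1 with ho
  have hstar_o : star o = o := by funext i; simp [ho]
  have hNpos : (0:ℝ) < n := by exact_mod_cast hn
  -- row sums of Q
  have hrowQ : ∀ i, (Q *ᵥ o) i = 2 * (hdeg E i : ℝ) := by
    intro i
    simp only [Matrix.mulVec, dotProduct, ho, mul_one]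
    exact row_sum_lap hU hk i
  -- Step 1 : q ≥ 2d
  have hP1 : (q • (1 : Matrix (Fin n) (Fin n) ℝ) - Q).PosSemidef := by
    have hrep : q • (1 : Matrix (Fin n) (Fin n) ℝ) - Q
        = U * Matrix.diagonal (fun j => q - μ j) * star U := by
      rw [rep_smul_one q]
      conv_lhs => rw [hrepQ]
      rw [← Matrix.sub_mul, ← Matrix.mul_sub, Matrix.diagonal_sub]
    rw [hrep]
    exact rep_psd _ fun j => sub_nonneg.mpr (hμq j)
  have h2d : 2 * d ≤ q := by
    have h1 := hP1.dotProduct_mulVec_nonneg o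
    rw [hstar_o, Matrix.sub_mulVec, Matrix.smul_mulVec, Matrix.one_mulVec,
      dotProduct_sub] at h1
    have e1 : o ⬝ᵥ q • o = q * n := by
      simp [dotProduct, ho, Finset.sum_const, Finset.card_univ, mul_comm]
    have e2 : o ⬝ᵥ (Q *ᵥ o) = ∑ i, 2 * (hdeg E i : ℝ) := by
      simp only [dotProduct, ho, one_mul]
      exact Finset.sum_congr rfl fun i _ => hrowQ i
    rw [e1, e2] at h1
    have e3 : (n:ℝ) * (2 * d) ≤ ∑ i, 2 * (hdeg E i : ℝ) := by
      calc (n:ℝ) * (2 * d) = ∑ _i : Fin n, 2 * d := by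
            simp [Finset.sum_const, Finset.card_univ, mul_comm]
        _ ≤ ∑ i, 2 * (hdeg E i : ℝ) := Finset.sum_le_sum fun i _ => by
            have := hd_le i; linarith
    have h4 : (2 * d) * n ≤ q * n := by nlinarith [le_trans e3 (by linarith : (∑ i, 2 * (hdeg E i : ℝ)) ≤ q * n)]
    exact le_of_mul_le_mul_right h4 hNpos
  -- Step 2 : the shifted matrix
  set c : ℝ := q - d / 2 with hcdef
  have hc0 : 0 ≤ c := by rw [hcdef]; linarith
  set B : Matrix (Fin n) (Fin n) ℝ := Q - (d/2) • 1 with hBdef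
  have hrepB : B = U * Matrix.diagonal (fun j => μ j - d/2) * star U := by
    rw [hBdef, rep_smul_one (d/2)]
    conv_lhs => rw [hrepQ]
    rw [← Matrix.sub_mul, ← Matrix.mul_sub, Matrix.diagonal_sub]
  have hP2 : (c^2 • (1 : Matrix (Fin n) (Fin n) ℝ) - B * B).PosSemidef := by
    have hrep : c^2 • (1 : Matrix (Fin n) (Fin n) ℝ) - B * B
        = U * Matrix.diagonal (fun j => c^2 - (μ j - d/2)^2) * star U := by
      rw [rep_smul_one (c^2), hrepB, conj_helper U hUU',
        ← Matrix.sub_mul, ← Matrix.mul_sub, Matrix.diagonal_sub]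
      refine congrArg (· * star U) (congrArg (U * ·) ?_)
      rw [Matrix.diagonal_eq_diagonal_iff]
      intro j
      ring
    rw [hrep]
    refine rep_psd _ fun j => ?_
    have h1 := hμq j
    have h2 := hμ0 j
    have ha : 0 ≤ c - (μ j - d/2) := by rw [hcdef]; linarith
    have hb : 0 ≤ c + (μ j - d/2) := by rw [hcdef]; linarith
    nlinarith [mul_nonneg ha hb]
  -- B is symmetric, so o ⬝ (B*B) o = |B o|²
  have hQsym : ∀ i j, Q j i = Q i j := by
    intro i j
    have := congrFun (congrFun hQH i) j
    simpa using this
  have hBsymm : Bᵀ = B := by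
    ext i j
    simp only [Matrix.transpose_apply, hBdef, Matrix.sub_apply, Matrix.smul_apply,
      smul_eq_mul]
    rw [hQsym i j]
    congr 1
    by_cases h : i = j
    · subst h; rfl
    · rw [Matrix.one_apply_ne h, Matrix.one_apply_ne (Ne.symm h)]
  have hw : ∀ i, (B *ᵥ o) i = 2 * (hdeg E i : ℝ) - d/2 := by
    intro i
    rw [hBdef, Matrix.sub_mulVec, Matrix.smul_mulVec, Matrix.one_mulVec]
    simp only [Pi.sub_apply, Pi.smul_apply, ho, smul_eq_mul, mul_one]
    rw [hrowQ i]
  have key : ∑ i, (2 * (hdeg E i : ℝ) - d/2)^2 ≤ c^2 * n := by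
    have h2 := hP2.dotProduct_mulVec_nonneg o
    rw [hstar_o, Matrix.sub_mulVec, Matrix.smul_mulVec, Matrix.one_mulVec,
      dotProduct_sub] at h2
    have e1 : o ⬝ᵥ c^2 • o = c^2 * n := by
      simp [dotProduct, ho, Finset.sum_const, Finset.card_univ, mul_comm]
    have e2 : o ⬝ᵥ ((B * B) *ᵥ o) = ∑ i, (2 * (hdeg E i : ℝ) - d/2)^2 := by
      rw [← Matrix.mulVec_mulVec]
      rw [Matrix.dotProduct_mulVec o B _]
      have : o ᵥ* B = B *ᵥ o := by
        rw [← Matrix.mulVec_transpose, hBsymm]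
      rw [this]
      simp only [dotProduct]
      refine Finset.sum_congr rfl fun i _ => ?_
      rw [hw i, sq]
    rw [e1, e2] at h2
    linarith
  -- Step 3 : combinatorial lower bound
  have lower : (n:ℝ) * (2 * (T * (1/((k:ℝ)-1))) + d^2/4)
      ≤ ∑ i, (2 * (hdeg E i : ℝ) - d/2)^2 := by
    have hsq : ∀ i, (2 * (hdeg E i : ℝ) - d/2)^2
        = 2 * (hdeg E i : ℝ)^2 + (2*(hdeg E i : ℝ)^2 - 2*d*(hdeg E i : ℝ)) + d^2/4 := by
      intro i; ring
    simp_rw [hsq]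
    rw [Finset.sum_add_distrib, Finset.sum_add_distrib]
    have hA : (0:ℝ) ≤ ∑ i, (2*(hdeg E i : ℝ)^2 - 2*d*(hdeg E i : ℝ)) := by
      refine Finset.sum_nonneg fun i _ => ?_
      have h1 := hd_le i
      have h2 : (0:ℝ) ≤ (hdeg E i : ℝ) := Nat.cast_nonneg _
      nlinarith [mul_nonneg h2 (sub_nonneg.mpr h1)]
    have hB2 : (n:ℝ) * (2 * (T * (1/((k:ℝ)-1)))) ≤ ∑ i, 2 * (hdeg E i : ℝ)^2 := by
      have step : ∀ i : Fin n, T * (1/((k:ℝ)-1)) ≤ ∑ l, adjMat E i l * (hdeg E l : ℝ) := by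
        intro i
        refine le_trans ?_ (weighted_row_bound hU hk i)
        have hKpos : (0:ℝ) ≤ 1/((k:ℝ)-1) := by apply div_nonneg zero_le_one; linarith
        exact mul_le_mul_of_nonneg_right (hT_le i) hKpos
      have : (n:ℝ) * (T * (1/((k:ℝ)-1))) ≤ ∑ i, (hdeg E i : ℝ)^2 := by
        rw [← sum_deg_sq hU hk]
        calc (n:ℝ) * (T * (1/((k:ℝ)-1))) = ∑ _i : Fin n, T * (1/((k:ℝ)-1)) := by
              simp [Finset.sum_const, Finset.card_univ, mul_comm]
          _ ≤ ∑ i, ∑ l, adjMat E i l * (hdeg E l : ℝ) :=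
              Finset.sum_le_sum fun i _ => step i
      calc (n:ℝ) * (2 * (T * (1/((k:ℝ)-1)))) = 2 * ((n:ℝ) * (T * (1/((k:ℝ)-1)))) := by ring
        _ ≤ 2 * ∑ i, (hdeg E i : ℝ)^2 := by linarith
        _ = ∑ i, 2 * (hdeg E i : ℝ)^2 := by rw [Finset.mul_sum]
    have hC : (∑ _i : Fin n, (d^2/4 : ℝ)) = (n:ℝ) * (d^2/4) := by
      simp [Finset.sum_const, Finset.card_univ, mul_comm]
    linarith [hB2, hA, hC]
  -- Step 4 : conclude
  have hc2 : 2 * (T * (1/((k:ℝ)-1))) + d^2/4 ≤ c^2 := by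
    have h5 : (2 * (T * (1/((k:ℝ)-1))) + d^2/4) * n ≤ c^2 * n := by
      nlinarith [le_trans lower key]
    exact le_of_mul_le_mul_right h5 hNpos
  have hsqrt : Real.sqrt (d^2 + 8/((k:ℝ)-1) * T) ≤ 2 * c := by
    have hineq : d^2 + 8/((k:ℝ)-1) * T ≤ (2*c)^2 := by
      have hrw : 8/((k:ℝ)-1) * T = 8 * (T * (1/((k:ℝ)-1))) := by ring
      rw [hrw]
      nlinarith [hc2]
    calc Real.sqrt (d^2 + 8/((k:ℝ)-1) * T) ≤ Real.sqrt ((2*c)^2) :=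
          Real.sqrt_le_sqrt hineq
      _ = 2 * c := Real.sqrt_sq (by linarith)
  rw [ge_iff_le, div_le_iff₀ (by norm_num : (0:ℝ) < 2)]
  calc d + Real.sqrt (d^2 + 8/((k:ℝ)-1) * T) ≤ d + 2 * c := by linarith
    _ = q * 2 := by rw [hcdef]; ring
end

section
/- Let H be a connected k-uniform hypergraph. Then q_max(H) ≤ max over vertices i of (d_i + s_i/(k-1)), where s_i = Σ_{j∼i} d_j·d_ij/d_i is the average degree of vertex i. -/
open Finset

private lemma signlessLap_apply_nonneg {n k : ℕ} (hk : 2 ≤ k) (E : Finset (Finset (Fin n)))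
    (hU : IsUniform k E) (i j : Fin n) : 0 ≤ signlessLap E i j := by
  unfold signlessLap adjMat
  rcases eq_or_ne i j with rfl | hij
  · simp [Matrix.diagonal_apply_eq]
  · simp only [Matrix.add_apply, Matrix.diagonal_apply_ne _ hij, Matrix.of_apply, if_neg hij,
      zero_add]
    apply Finset.sum_nonneg
    intro e he
    have : e.card = k := hU e (Finset.mem_filter.mp he).1
    rw [this]
    have : (1:ℝ) ≤ (k:ℝ) - 1 := by
      have : (2:ℝ) ≤ (k:ℝ) := by exact_mod_cast hk
      linarith
    positivity

private lemma mem_neighbors {n : ℕ} (E : Finset (Finset (Fin n))) (i j : Fin n) :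
    j ∈ neighbors E i ↔ Adj E i j := by
  unfold neighbors
  simp only [Finset.mem_filter, Finset.mem_univ, true_and]

private lemma hdeg_pos {n k : ℕ} (hk : 2 ≤ k) (E : Finset (Finset (Fin n)))
    (hU : IsUniform k E) (hc : Conn E) (hE : E.Nonempty) (i : Fin n) : 0 < hdeg E i := by
  obtain ⟨e, he⟩ := hE
  have hcard : e.card = k := hU e he
  have hene : e.Nonempty := Finset.card_pos.mp (by omega)
  obtain ⟨v, hv⟩ := hene
  have key : ∃ f ∈ E, i ∈ f := by
    rcases (Relation.ReflTransGen.cases_head (hc i v)) with h | ⟨m, ⟨_, f, hf, hif, _⟩, _⟩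
    · exact ⟨e, he, h ▸ hv⟩
    · exact ⟨f, hf, hif⟩
  obtain ⟨f, hf, hif⟩ := key
  exact Finset.card_pos.mpr ⟨f, Finset.mem_filter.mpr ⟨hf, hif⟩⟩

theorem stmt_5 (n k : ℕ) (hn : 0 < n) (hk : 2 ≤ k) (E : Finset (Finset (Fin n)))
    (hU : IsUniform k E) (hc : Conn E) :
    qmax (signlessLap E) ≤
      ⨆ i : Fin n, ((hdeg E i : ℝ) +
        ((∑ j ∈ neighbors E i, (hdeg E j : ℝ) * ((edgesBetween E i j).card : ℝ)) /
            (hdeg E i : ℝ)) / ((k : ℝ) - 1)) := by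
  have hk1 : (1:ℝ) ≤ (k:ℝ) - 1 := by
    have : (2:ℝ) ≤ (k:ℝ) := by exact_mod_cast hk
    linarith
  set f : Fin n → ℝ := fun i => ((hdeg E i : ℝ) +
      ((∑ j ∈ neighbors E i, (hdeg E j : ℝ) * ((edgesBetween E i j).card : ℝ)) /
          (hdeg E i : ℝ)) / ((k : ℝ) - 1)) with hf
  have hfnn : ∀ i, 0 ≤ f i := by
    intro i
    have h1 : (0:ℝ) ≤ (hdeg E i : ℝ) := Nat.cast_nonneg _
    have h2 : 0 ≤ ∑ j ∈ neighbors E i, (hdeg E j : ℝ) * ((edgesBetween E i j).card : ℝ) :=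
      Finset.sum_nonneg fun j _ => mul_nonneg (Nat.cast_nonneg _) (Nat.cast_nonneg _)
    have := div_nonneg (div_nonneg h2 h1) (by linarith : (0:ℝ) ≤ (k:ℝ) - 1)
    simp only [hf]
    linarith
  have hbdd : BddAbove (Set.range f) := (Set.finite_range f).bddAbove
  have i0 : Fin n := ⟨0, hn⟩
  have hsup0 : (0:ℝ) ≤ ⨆ i, f i := le_trans (hfnn i0) (le_ciSup hbdd i0)
  apply Real.sSup_le _ hsup0
  intro lam hlam
  -- extract an eigenvector
  have hdet : ((algebraMap ℝ (Matrix (Fin n) (Fin n) ℝ)) lam - signlessLap E).det = 0 := by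
    by_contra h
    exact (spectrum.mem_iff.mp hlam)
      ((Matrix.isUnit_iff_isUnit_det _).mpr (isUnit_iff_ne_zero.mpr h))
  obtain ⟨x, hx0, hxe⟩ := Matrix.exists_mulVec_eq_zero_iff.mpr hdet
  have heig : ∀ i, ∑ j, signlessLap E i j * x j = lam * x i := by
    intro i
    have h := congrFun hxe i
    simp only [Matrix.mulVec, dotProduct, Matrix.sub_apply, sub_mul,
      Finset.sum_sub_distrib, Pi.zero_apply, sub_eq_zero,
      Matrix.algebraMap_matrix_apply, ite_mul, zero_mul] at h
    rw [← h]
    simp [Finset.sum_ite_eq, mul_comm]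
  rcases Finset.eq_empty_or_nonempty E with rfl | hE
  · -- empty hypergraph: the matrix is zero, so lam = 0
    have hM : signlessLap (∅ : Finset (Finset (Fin n))) = 0 := by
      ext i j
      unfold signlessLap adjMat hdeg edgesBetween
      rcases eq_or_ne i j with rfl | hij
      · simp
      · simp [Matrix.diagonal_apply_ne _ hij, hij]
    obtain ⟨j, hj⟩ := Function.ne_iff.mp hx0
    have := heig j
    rw [hM] at this
    simp only [Matrix.zero_apply, zero_mul, Finset.sum_const_zero] at this
    have hlam0 : lam = 0 := by
      rcases mul_eq_zero.mp this.symm with h | h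
      · exact h
      · exact absurd h hj
    rw [hlam0]
    exact hsup0
  · have hdpos : ∀ j, (0:ℝ) < (hdeg E j : ℝ) := fun j => by
      exact_mod_cast hdeg_pos hk E hU hc hE j
    set d : Fin n → ℝ := fun j => (hdeg E j : ℝ) with hd
    set y : Fin n → ℝ := fun j => x j / d j with hy
    obtain ⟨i, -, hmax⟩ := Finset.exists_max_image Finset.univ (fun j => |y j|)
      ⟨i0, Finset.mem_univ i0⟩
    have hyi : 0 < |y i| := by
      obtain ⟨j, hj⟩ := Function.ne_iff.mp hx0
      have : y j ≠ 0 := by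
        simp only [hy, div_ne_zero_iff]
        exact ⟨hj, ne_of_gt (hdpos j)⟩
      exact lt_of_lt_of_le (abs_pos.mpr this) (hmax j (Finset.mem_univ j))
    have hQnn : ∀ a b, 0 ≤ signlessLap E a b := signlessLap_apply_nonneg hk E hU
    -- key equation
    have hkey : lam * y i = ∑ j, (signlessLap E i j * d j / d i) * y j := by
      have h1 := heig i
      have hdi : d i ≠ 0 := ne_of_gt (hdpos i)
      have : lam * y i = (∑ j, signlessLap E i j * x j) / d i := by
        rw [h1]; simp only [hy]; ring
      rw [this, Finset.sum_div]
      apply Finset.sum_congr rfl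
      intro j _
      have hdj : d j ≠ 0 := ne_of_gt (hdpos j)
      simp only [hy]
      field_simp
    -- bound
    have hband : lam * |y i| ≤ (∑ j, signlessLap E i j * d j / d i) * |y i| := by
      calc lam * |y i| ≤ |lam * y i| := by
              rw [abs_mul]
              exact mul_le_mul_of_nonneg_right (le_abs_self lam) (abs_nonneg _)
        _ = |∑ j, (signlessLap E i j * d j / d i) * y j| := by rw [hkey]
        _ ≤ ∑ j, |(signlessLap E i j * d j / d i) * y j| := Finset.abs_sum_le_sum_abs _ _
        _ ≤ ∑ j, (signlessLap E i j * d j / d i) * |y i| := by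
              apply Finset.sum_le_sum
              intro j _
              rw [abs_mul]
              have hnn : 0 ≤ signlessLap E i j * d j / d i :=
                div_nonneg (mul_nonneg (hQnn i j) (le_of_lt (hdpos j))) (le_of_lt (hdpos i))
              rw [abs_of_nonneg hnn]
              exact mul_le_mul_of_nonneg_left (hmax j (Finset.mem_univ j)) hnn
        _ = (∑ j, signlessLap E i j * d j / d i) * |y i| := by rw [Finset.sum_mul]
    have hlamle : lam ≤ ∑ j, signlessLap E i j * d j / d i :=
      le_of_mul_le_mul_right hband hyi
    -- row sum equals f i
    have hrow : ∑ j, signlessLap E i j * d j / d i = f i := by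
      have hdi : d i ≠ 0 := ne_of_gt (hdpos i)
      rw [← Finset.sum_erase_add _ _ (Finset.mem_univ i)]
      have hdiag : signlessLap E i i = d i := by
        unfold signlessLap adjMat
        simp [Matrix.diagonal_apply_eq]
        rfl
      have hterm : signlessLap E i i * d i / d i = d i := by
        rw [hdiag, mul_div_assoc, div_self hdi, mul_one]
      rw [hterm]
      have hsub : neighbors E i ⊆ Finset.univ.erase i := by
        intro j hj
        have : Adj E i j := ((mem_neighbors E i j).mp hj)
        exact Finset.mem_erase.mpr ⟨(this.1).symm, Finset.mem_univ j⟩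
      have hersum : ∑ j ∈ Finset.univ.erase i, signlessLap E i j * d j / d i =
          ∑ j ∈ neighbors E i, signlessLap E i j * d j / d i := by
        symm
        apply Finset.sum_subset hsub
        intro j hj hjn
        have hji : j ≠ i := (Finset.mem_erase.mp hj).1
        have hnadj : ¬ Adj E i j := by
          intro h
          exact hjn ((mem_neighbors E i j).mpr h)
        have hemp : edgesBetween E i j = ∅ := by
          rw [Finset.eq_empty_iff_forall_notMem]
          intro e he
          obtain ⟨heE, hie, hje⟩ := Finset.mem_filter.mp he
          exact hnadj ⟨hji.symm, e, heE, hie, hje⟩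
        unfold signlessLap adjMat
        simp [Matrix.diagonal_apply_ne _ (Ne.symm hji), Ne.symm hji, hemp]
      rw [hersum]
      have hentry : ∀ j ∈ neighbors E i, signlessLap E i j * d j / d i =
          (d j * ((edgesBetween E i j).card : ℝ)) / d i / ((k:ℝ) - 1) := by
        intro j hj
        have hadj : Adj E i j := ((mem_neighbors E i j).mp hj)
        have hij : i ≠ j := hadj.1
        have hQ : signlessLap E i j = ((edgesBetween E i j).card : ℝ) / ((k:ℝ) - 1) := by
          unfold signlessLap adjMat
          simp only [Matrix.add_apply, Matrix.diagonal_apply_ne _ hij, Matrix.of_apply,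
            if_neg hij, zero_add]
          rw [Finset.sum_congr rfl (fun e he => by
            rw [hU e (Finset.mem_filter.mp he).1])]
          rw [Finset.sum_const, nsmul_eq_mul]
          ring
        rw [hQ]
        field_simp
      rw [Finset.sum_congr rfl hentry]
      rw [← Finset.sum_div, ← Finset.sum_div]
      simp only [hf, hd]
      exact add_comm _ _
    rw [hrow] at hlamle
    exact le_trans hlamle (le_ciSup hbdd i)
end

section
/- Let H be a k-uniform hypergraph on n vertices with at least one hyperedge. Then the signless Laplacian spread s_Q(H) = q_max(H) − q_min(H) satisfies s_Q(H) > 1. -/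
open Finset

open Matrix Pointwise

private lemma sl_mem_spec_le_sSup {n : ℕ} (M : Matrix (Fin n) (Fin n) ℝ) {t : ℝ}
    (ht : t ∈ spectrum ℝ M) : t ≤ sSup (spectrum ℝ M) :=
  le_csSup (Matrix.finite_real_spectrum (A := M)).bddAbove ht

private lemma sl_sInf_le_mem_spec {n : ℕ} (M : Matrix (Fin n) (Fin n) ℝ) {t : ℝ}
    (ht : t ∈ spectrum ℝ M) : sInf (spectrum ℝ M) ≤ t :=
  csInf_le (Matrix.finite_real_spectrum (A := M)).bddBelow ht

private lemma sl_rayleigh_le_qmax {n : ℕ} {M : Matrix (Fin n) (Fin n) ℝ} (hM : M.IsHermitian)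
    (x : Fin n → ℝ) : x ⬝ᵥ (M *ᵥ x) ≤ sSup (spectrum ℝ M) * (x ⬝ᵥ x) := by
  set μ := sSup (spectrum ℝ M) with hμ
  have hB : (μ • (1 : Matrix (Fin n) (Fin n) ℝ) - M).IsHermitian := by
    unfold Matrix.IsHermitian at *
    rw [Matrix.conjTranspose_sub, Matrix.conjTranspose_smul, hM, Matrix.conjTranspose_one]
    simp
  have hspec : spectrum ℝ (μ • (1 : Matrix (Fin n) (Fin n) ℝ) - M)
      = ({μ} : Set ℝ) - spectrum ℝ M := by
    rw [← Algebra.algebraMap_eq_smul_one]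
    exact (spectrum.singleton_sub_eq M μ).symm
  have hpsd : (μ • (1 : Matrix (Fin n) (Fin n) ℝ) - M).PosSemidef := by
    refine (Matrix.IsHermitian.posSemidef_iff_eigenvalues_nonneg hB).mpr fun i => ?_
    show 0 ≤ Matrix.IsHermitian.eigenvalues hB i
    have h1 := Matrix.IsHermitian.eigenvalues_mem_spectrum_real hB i
    rw [hspec] at h1
    obtain ⟨a, ha, b, hb, hab⟩ := h1
    simp only [Set.mem_singleton_iff] at ha
    subst ha
    have hle := sl_mem_spec_le_sSup M hb
    have hab' : μ - b = Matrix.IsHermitian.eigenvalues hB i := hab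
    rw [← hab']; linarith
  have h2 := hpsd.dotProduct_mulVec_nonneg x
  simp only [star_trivial] at h2
  have h3 : (μ • (1 : Matrix (Fin n) (Fin n) ℝ) - M) *ᵥ x = μ • x - M *ᵥ x := by
    rw [Matrix.sub_mulVec, Matrix.smul_mulVec, Matrix.one_mulVec]
  rw [h3, dotProduct_sub, dotProduct_smul] at h2
  simp only [smul_eq_mul] at h2
  linarith

private lemma sl_qmin_le_rayleigh {n : ℕ} {M : Matrix (Fin n) (Fin n) ℝ} (hM : M.IsHermitian)
    (x : Fin n → ℝ) : sInf (spectrum ℝ M) * (x ⬝ᵥ x) ≤ x ⬝ᵥ (M *ᵥ x) := by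
  set ν := sInf (spectrum ℝ M) with hν
  have hB : (M - ν • (1 : Matrix (Fin n) (Fin n) ℝ)).IsHermitian := by
    unfold Matrix.IsHermitian at *
    rw [Matrix.conjTranspose_sub, Matrix.conjTranspose_smul, hM, Matrix.conjTranspose_one]
    simp
  have hspec : spectrum ℝ (M - ν • (1 : Matrix (Fin n) (Fin n) ℝ))
      = spectrum ℝ M - ({ν} : Set ℝ) := by
    rw [← Algebra.algebraMap_eq_smul_one]
    exact (spectrum.sub_singleton_eq M ν).symm
  have hpsd : (M - ν • (1 : Matrix (Fin n) (Fin n) ℝ)).PosSemidef := by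
    refine (Matrix.IsHermitian.posSemidef_iff_eigenvalues_nonneg hB).mpr fun i => ?_
    show 0 ≤ Matrix.IsHermitian.eigenvalues hB i
    have h1 := Matrix.IsHermitian.eigenvalues_mem_spectrum_real hB i
    rw [hspec] at h1
    obtain ⟨a, ha, b, hb, hab⟩ := h1
    simp only [Set.mem_singleton_iff] at hb
    subst hb
    have hle := sl_sInf_le_mem_spec M ha
    have hab' : a - ν = Matrix.IsHermitian.eigenvalues hB i := hab
    rw [← hab']; linarith
  have h2 := hpsd.dotProduct_mulVec_nonneg x
  simp only [star_trivial] at h2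
  have h3 : (M - ν • (1 : Matrix (Fin n) (Fin n) ℝ)) *ᵥ x = M *ᵥ x - ν • x := by
    rw [Matrix.sub_mulVec, Matrix.smul_mulVec, Matrix.one_mulVec]
  rw [h3, dotProduct_sub, dotProduct_smul] at h2
  simp only [smul_eq_mul] at h2
  linarith

private lemma sl_quad_ind {n : ℕ} (M : Matrix (Fin n) (Fin n) ℝ) (s : Finset (Fin n)) :
    (fun i => if i ∈ s then (1:ℝ) else 0) ⬝ᵥ (M *ᵥ fun i => if i ∈ s then (1:ℝ) else 0)
      = ∑ i ∈ s, ∑ j ∈ s, M i j := by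
  simp [dotProduct, Matrix.mulVec, ite_mul, mul_ite, Finset.sum_ite_mem]

private lemma sl_ind_dot {n : ℕ} (s : Finset (Fin n)) :
    (fun i => if i ∈ s then (1:ℝ) else 0) ⬝ᵥ (fun i => if i ∈ s then (1:ℝ) else 0)
      = s.card := by
  simp [dotProduct, ite_mul, Finset.sum_ite_mem]

private lemma sl_quad_two {n : ℕ} (M : Matrix (Fin n) (Fin n) ℝ) (v w : Fin n) (c : ℝ) :
    (Pi.single v 1 + Pi.single w c) ⬝ᵥ (M *ᵥ (Pi.single v 1 + Pi.single w c))
      = M v v + c * M v w + c * M w v + c^2 * M w w := by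
  simp [dotProduct_add, add_dotProduct, Matrix.mulVec_add, Matrix.mulVec_single,
    dotProduct_single, single_dotProduct]
  ring

private lemma sl_dot_two {n : ℕ} (v w : Fin n) (hvw : v ≠ w) (c : ℝ) :
    (Pi.single v 1 + Pi.single w c) ⬝ᵥ (Pi.single v 1 + Pi.single w c) = 1 + c^2 := by
  simp [dotProduct_add, add_dotProduct, dotProduct_single, single_dotProduct,
    Pi.single_apply, hvw, hvw.symm]
  ring

private lemma sl_Q_diag {n : ℕ} {E : Finset (Finset (Fin n))} (i : Fin n) :
    signlessLap E i i = hdeg E i := by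
  simp [signlessLap, adjMat, Matrix.diagonal]

private lemma sl_Q_off {n : ℕ} {E : Finset (Finset (Fin n))} {i j : Fin n} (h : i ≠ j) :
    signlessLap E i j = ∑ e ∈ edgesBetween E i j, 1 / ((e.card : ℝ) - 1) := by
  simp [signlessLap, adjMat, Matrix.diagonal, h]

private lemma sl_Q_herm {n : ℕ} {E : Finset (Finset (Fin n))} :
    (signlessLap E).IsHermitian := by
  refine Matrix.IsHermitian.ext fun i j => ?_
  simp only [RCLike.star_def, starRingEnd_apply, star_trivial]
  rcases eq_or_ne i j with rfl | h
  · rfl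
  · rw [sl_Q_off h.symm, sl_Q_off h]
    congr 1
    unfold edgesBetween
    exact Finset.filter_congr fun e _ => by tauto

private lemma sl_kcast {k : ℕ} (hk : 2 ≤ k) : (1:ℝ) ≤ (k:ℝ) - 1 := by
  have : (2:ℝ) ≤ (k:ℝ) := by exact_mod_cast hk
  linarith

private lemma sl_Q_off_ge {n k : ℕ} {E : Finset (Finset (Fin n))} (hk : 2 ≤ k)
    (hU : IsUniform k E) {i j : Fin n} (h : i ≠ j)
    {e₀ : Finset (Fin n)} (he₀ : e₀ ∈ E) (hi : i ∈ e₀) (hj : j ∈ e₀) :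
    1 / ((k:ℝ) - 1) ≤ signlessLap E i j := by
  rw [sl_Q_off h]
  have hmem : e₀ ∈ edgesBetween E i j := Finset.mem_filter.mpr ⟨he₀, hi, hj⟩
  have := Finset.single_le_sum (f := fun e => 1 / ((e.card : ℝ) - 1))
    (fun e he => by
      rw [hU e (Finset.mem_filter.mp he).1]
      have := sl_kcast hk
      positivity) hmem
  simp only [hU e₀ he₀] at this
  exact this

theorem stmt_13 (n k : ℕ) (hk : 2 ≤ k) (E : Finset (Finset (Fin n)))
    (hE : E.Nonempty) (hU : IsUniform k E) (hc : Conn E) :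
    qmax (signlessLap E) - qmin (signlessLap E) > 1 := by
  classical
  obtain ⟨e₀, he₀⟩ := hE
  have hke : e₀.card = k := hU e₀ he₀
  have hnk : k ≤ n := by
    have := Finset.card_le_univ e₀
    simpa [hke, Finset.card_univ] using this
  have hn2 : 2 ≤ n := le_trans hk hnk
  have hn0 : 0 < n := by omega
  -- minimum degree vertex
  obtain ⟨v, -, hv⟩ := Finset.exists_min_image (Finset.univ : Finset (Fin n)) (hdeg E)
    ⟨⟨0, hn0⟩, Finset.mem_univ _⟩
  set d : ℝ := (hdeg E v : ℝ) with hd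
  have hd0 : 0 ≤ d := Nat.cast_nonneg _
  set Q := signlessLap E with hQdef
  have hQ : Q.IsHermitian := sl_Q_herm
  have hk1 := sl_kcast hk
  -- qmax lower bound via indicator of e₀
  have hqmax : d + 1 ≤ qmax Q := by
    set y : Fin n → ℝ := fun i => if i ∈ e₀ then (1:ℝ) else 0 with hy
    have h1 := sl_rayleigh_le_qmax hQ y
    rw [sl_quad_ind, sl_ind_dot, hke] at h1
    have hinner : ∀ i ∈ e₀, d + 1 ≤ ∑ j ∈ e₀, Q i j := by
      intro i hi
      rw [← Finset.add_sum_erase _ _ hi]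
      have h2 : d ≤ Q i i := by
        rw [hQdef, sl_Q_diag]
        show (hdeg E v : ℝ) ≤ (hdeg E i : ℝ)
        exact_mod_cast hv i (Finset.mem_univ i)
      have h3 : (1:ℝ) ≤ ∑ j ∈ e₀.erase i, Q i j := by
        have h4 : (e₀.erase i).card • (1 / ((k:ℝ) - 1)) ≤ ∑ j ∈ e₀.erase i, Q i j := by
          refine Finset.card_nsmul_le_sum _ _ _ fun j hj => ?_
          obtain ⟨hji, hje⟩ := Finset.mem_erase.mp hj
          exact sl_Q_off_ge hk hU (Ne.symm hji) he₀ hi hje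
        rw [Finset.card_erase_of_mem hi, hke] at h4
        have hc : ((k - 1 : ℕ) : ℝ) = (k:ℝ) - 1 := by
          push_cast [Nat.cast_sub (by omega : 1 ≤ k)]; ring
        rw [nsmul_eq_mul, hc] at h4
        calc (1:ℝ) = ((k:ℝ) - 1) * (1 / ((k:ℝ) - 1)) := by
              field_simp
          _ ≤ ∑ j ∈ e₀.erase i, Q i j := h4
      linarith
    have h5 : (k:ℝ) * (d + 1) ≤ ∑ i ∈ e₀, ∑ j ∈ e₀, Q i j := by
      calc (k:ℝ) * (d + 1) = ∑ _i ∈ e₀, (d + 1) := by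
            rw [Finset.sum_const, hke, nsmul_eq_mul]
        _ ≤ _ := Finset.sum_le_sum hinner
    have hkpos : (0:ℝ) < (k:ℝ) := by positivity
    unfold qmax
    nlinarith
  -- find a neighbour w of v
  obtain ⟨w, hw⟩ : ∃ w, Adj E v w := by
    have hu : ∃ u : Fin n, u ≠ v := by
      rcases eq_or_ne v ⟨0, hn0⟩ with rfl | h
      · exact ⟨⟨1, by omega⟩, by simp [Fin.ext_iff]⟩
      · exact ⟨⟨0, hn0⟩, Ne.symm h⟩
    obtain ⟨u, hu⟩ := hu
    rcases (hc v u).cases_head with h | ⟨c, hvc, -⟩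
    · exact absurd h.symm hu
    · exact ⟨c, hvc⟩
  obtain ⟨hvw, e₁, he₁, hve₁, hwe₁⟩ := hw
  set a : ℝ := Q v w with hadef
  have ha : 1 / ((k:ℝ) - 1) ≤ a := sl_Q_off_ge hk hU hvw he₁ hve₁ hwe₁
  have hapos : 0 < a := lt_of_lt_of_le (by positivity) ha
  set dw : ℝ := (hdeg E w : ℝ) with hdw
  have hdwd : d ≤ dw := by
    show (hdeg E v : ℝ) ≤ (hdeg E w : ℝ)
    exact_mod_cast hv w (Finset.mem_univ w)
  set t : ℝ := a / (dw + 1) with htdef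
  have hdw0 : (0:ℝ) ≤ dw := Nat.cast_nonneg _
  have htpos : 0 < t := by positivity
  have hta : t * (dw + 1) = a := by
    rw [htdef]; field_simp
  -- qmin strict upper bound
  have hqmin : qmin Q < d := by
    have h1 := sl_qmin_le_rayleigh hQ (Pi.single v 1 + Pi.single w (-t))
    rw [sl_quad_two, sl_dot_two v w hvw] at h1
    have hQwv : Q w v = Q v w := by
      conv_lhs => rw [← hQ]
      simp [Matrix.conjTranspose_apply]
    rw [hQwv] at h1
    have hQvv : Q v v = d := by rw [hQdef, sl_Q_diag]
    have hQww : Q w w = dw := by rw [hQdef, sl_Q_diag]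
    rw [hQvv, hQww, ← hadef] at h1
    -- h1 : qmin Q * (1 + t^2) ≤ d + -t * a + -t * a + t^2 * dw
    have key : t * dw < a := by nlinarith
    unfold qmin
    nlinarith [sq_nonneg t, mul_pos htpos htpos]
  have h6 : qmin (signlessLap E) < d := hqmin
  have h7 : d + 1 ≤ qmax (signlessLap E) := hqmax
  linarith
end

section
/- For each integer n₁ ≥ 2, the (n₁+1)-uniform hypergraph H on n₁+1 vertices with exactly one hyperedge (the full vertex set) has signless Laplacian spectrum {2 (multiplicity 1), 1 − 1/n₁ (multiplicity n₁)}, hence its signless Laplacian spread equals 1 + 1/n₁. Consequently the infimum of s_Q(H) over all hypergraphs with finitely many vertices and at least one hyperedge equals 1. -/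
open Finset

open Polynomial Matrix in
lemma SL_eval_charpoly {n : ℕ} (M : Matrix (Fin n) (Fin n) ℝ) (t : ℝ) :
    (M.charpoly).eval t = (t • (1 : Matrix (Fin n) (Fin n) ℝ) - M).det := by
  rw [Matrix.charpoly, ← Polynomial.coe_evalRingHom, RingHom.map_det]
  congr 1
  ext i j
  by_cases h : i = j
  · subst h
    simp [Matrix.charmatrix_apply_eq, Matrix.one_apply]
  · simp [Matrix.charmatrix_apply_ne _ _ _ h, Matrix.one_apply_ne h]

lemma SL_mem_spectrum_iff_root {n : ℕ} (M : Matrix (Fin n) (Fin n) ℝ) (μ : ℝ) :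
    μ ∈ spectrum ℝ M ↔ (M.charpoly).eval μ = 0 := by
  rw [spectrum.mem_iff, Matrix.isUnit_iff_isUnit_det, isUnit_iff_ne_zero, not_not,
    SL_eval_charpoly, Algebra.algebraMap_eq_smul_one]

lemma SL_univ_eq (n : ℕ) :
    signlessLap ({Finset.univ} : Finset (Finset (Fin (n+1)))) =
      Matrix.of (fun i j => if i = j then (1:ℝ) else 1 / n) := by
  ext i j
  by_cases h : i = j
  · subst h
    simp [signlessLap, adjMat, hdeg, Matrix.diagonal_apply, Finset.filter_singleton]
  · simp only [signlessLap, adjMat, Matrix.add_apply, Matrix.diagonal_apply,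
      Matrix.of_apply, if_neg h]
    rw [edgesBetween, Finset.filter_singleton, if_pos (by simp)]
    simp [h]

lemma SL_charpoly (n : ℕ) (hn : 1 ≤ n) :
    (signlessLap ({Finset.univ} : Finset (Finset (Fin (n+1))))).charpoly
      = (Polynomial.X - Polynomial.C 2) *
        (Polynomial.X - Polynomial.C (1 - 1/(n:ℝ)))^n := by
  set c : ℝ := 1 - 1/(n:ℝ) with hc
  have hn0 : (n:ℝ) ≠ 0 := Nat.cast_ne_zero.mpr (by omega)
  set M := signlessLap ({Finset.univ} : Finset (Finset (Fin (n+1)))) with hM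
  have key : ∀ t : ℝ, t ≠ c → (M.charpoly).eval t = (t - 2) * (t - c)^n := by
    intro t ht
    have htc : t - c ≠ 0 := sub_ne_zero.mpr ht
    have htc' : t - (1 - 1/(n:ℝ)) ≠ 0 := by rw [← hc]; exact htc
    have hkey : (t - c) * (1/((n:ℝ)*(t-c))) = 1/(n:ℝ) := by
      field_simp
    rw [SL_eval_charpoly]
    have hrw : t • (1 : Matrix (Fin (n+1)) (Fin (n+1)) ℝ) - M
        = (t - c) • (1 + Matrix.replicateCol Unit (fun _ => -(1/((n:ℝ)*(t-c)))) *
            Matrix.replicateRow Unit (fun _ => (1:ℝ))) := by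
      rw [hM, SL_univ_eq]
      ext i j
      by_cases h : i = j
      · subst h
        simp only [Matrix.sub_apply, Matrix.smul_apply, Matrix.one_apply_eq, Matrix.of_apply,
          if_pos rfl, Matrix.add_apply, Matrix.mul_apply, Matrix.replicateCol_apply, Matrix.replicateRow_apply,
          Finset.univ_unique, Finset.sum_singleton, smul_eq_mul]
        simp only [if_true]
        linear_combination hkey + hc
      · simp only [Matrix.sub_apply, Matrix.smul_apply, Matrix.one_apply_ne h, Matrix.of_apply,
          if_neg h, Matrix.add_apply, Matrix.mul_apply, Matrix.replicateCol_apply, Matrix.replicateRow_apply,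
          Finset.univ_unique, Finset.sum_singleton, smul_eq_mul]
        linear_combination hkey
    rw [hrw, Matrix.det_smul, Matrix.det_one_add_replicateCol_mul_replicateRow]
    simp only [dotProduct, Finset.sum_const, Finset.card_univ, Fintype.card_fin,
      nsmul_eq_mul, smul_eq_mul, mul_one]
    push_cast
    have h4 : (t - c) * (((n:ℝ)+1) * (1/((n:ℝ)*(t-c)))) = ((n:ℝ)+1)/(n:ℝ) := by
      field_simp
    have h5 : c + ((n:ℝ)+1)/(n:ℝ) = 2 := by
      rw [hc]
      field_simp
      ring
    calc (t-c)^(n+1) * (1 + ((n:ℝ)+1) * (1 * -(1/((n:ℝ)*(t-c)))))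
        = (t-c)^n * ((t-c) - (t - c) * (((n:ℝ)+1) * (1/((n:ℝ)*(t-c))))) := by
          rw [pow_succ]; ring
      _ = (t-c)^n * ((t-c) - ((n:ℝ)+1)/(n:ℝ)) := by rw [h4]
      _ = (t-2) * (t-c)^n := by rw [show (t-c) - ((n:ℝ)+1)/(n:ℝ) = t - (c + ((n:ℝ)+1)/(n:ℝ)) by ring, h5]; ring
  have : M.charpoly - (Polynomial.X - Polynomial.C 2) * (Polynomial.X - Polynomial.C c)^n = 0 := by
    apply Polynomial.eq_zero_of_infinite_isRoot
    apply Set.Infinite.mono (s := {c}ᶜ)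
    · intro t ht
      simp only [Set.mem_setOf_eq, Polynomial.IsRoot, Polynomial.eval_sub, Polynomial.eval_mul,
        Polynomial.eval_pow, Polynomial.eval_X, Polynomial.eval_C]
      rw [key t ht]
      ring
    · exact Set.Finite.infinite_compl (Set.finite_singleton c)
  linear_combination this

lemma SL_spectrum (n : ℕ) (hn : 1 ≤ n) :
    spectrum ℝ (signlessLap ({Finset.univ} : Finset (Finset (Fin (n+1)))))
      = {(2:ℝ), 1 - 1/(n:ℝ)} := by
  ext μ
  rw [SL_mem_spectrum_iff_root, SL_charpoly n hn]
  simp only [Polynomial.eval_mul, Polynomial.eval_pow, Polynomial.eval_sub, Polynomial.eval_X,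
    Polynomial.eval_C, mul_eq_zero, pow_eq_zero_iff (by omega : n ≠ 0), sub_eq_zero,
    Set.mem_insert_iff, Set.mem_singleton_iff]

lemma SL_rm2 (n : ℕ) (hn : 1 ≤ n) :
    ((signlessLap ({Finset.univ} : Finset (Finset (Fin (n+1))))).charpoly).rootMultiplicity
      (2:ℝ) = 1 := by
  have hne : ((Polynomial.X - Polynomial.C (2:ℝ)) *
      (Polynomial.X - Polynomial.C (1 - 1/(n:ℝ)))^n) ≠ 0 :=
    mul_ne_zero (Polynomial.X_sub_C_ne_zero 2)
      (pow_ne_zero _ (Polynomial.X_sub_C_ne_zero _))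
  rw [SL_charpoly n hn, Polynomial.rootMultiplicity_mul hne,
    Polynomial.rootMultiplicity_X_sub_C_self,
    Polynomial.rootMultiplicity_eq_zero]
  · have h1n : 0 < 1/(n:ℝ) := by positivity
    simp only [Polynomial.IsRoot, Polynomial.eval_pow, Polynomial.eval_sub, Polynomial.eval_X,
      Polynomial.eval_C]
    intro h
    have := pow_eq_zero_iff (by omega : n ≠ 0) |>.mp h
    have : (2:ℝ) = 1 - 1/(n:ℝ) := by linarith [sub_eq_zero.mp this]
    linarith

lemma SL_rmc (n : ℕ) (hn : 1 ≤ n) :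
    ((signlessLap ({Finset.univ} : Finset (Finset (Fin (n+1))))).charpoly).rootMultiplicity
      (1 - 1/(n:ℝ)) = n := by
  have hne : ((Polynomial.X - Polynomial.C (2:ℝ)) *
      (Polynomial.X - Polynomial.C (1 - 1/(n:ℝ)))^n) ≠ 0 :=
    mul_ne_zero (Polynomial.X_sub_C_ne_zero 2)
      (pow_ne_zero _ (Polynomial.X_sub_C_ne_zero _))
  rw [SL_charpoly n hn, Polynomial.rootMultiplicity_mul hne,
    Polynomial.rootMultiplicity_X_sub_C_pow,
    Polynomial.rootMultiplicity_eq_zero]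
  · omega
  · have h1n : 0 < 1/(n:ℝ) := by positivity
    simp only [Polynomial.IsRoot, Polynomial.eval_sub, Polynomial.eval_X, Polynomial.eval_C]
    intro h
    have := sub_eq_zero.mp h
    linarith

lemma SL_spread (n : ℕ) (hn : 1 ≤ n) :
    qmax (signlessLap ({Finset.univ} : Finset (Finset (Fin (n+1)))))
      - qmin (signlessLap ({Finset.univ} : Finset (Finset (Fin (n+1)))))
      = 1 + 1/(n:ℝ) := by
  have h1n : 0 < 1/(n:ℝ) := by positivity
  have h1n' : 1/(n:ℝ) ≤ 1 := by
    rw [div_le_one (by positivity)]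
    exact_mod_cast hn
  have hle : (1 - 1/(n:ℝ)) ≤ 2 := by linarith
  rw [qmax, qmin, SL_spectrum n hn, csSup_pair, csInf_pair, sup_eq_left.mpr hle,
    inf_eq_right.mpr hle]
  ring

open Matrix in
lemma dot_spectral {m : ℕ} {M : Matrix (Fin m) (Fin m) ℝ} (hM : M.IsHermitian) (x : Fin m → ℝ) :
    ∃ y : Fin m → ℝ, x ⬝ᵥ (M *ᵥ x) = ∑ i, hM.eigenvalues i * (y i)^2 ∧ x ⬝ᵥ x = ∑ i, (y i)^2 := by
  set U : Matrix (Fin m) (Fin m) ℝ := (hM.eigenvectorUnitary : Matrix (Fin m) (Fin m) ℝ) with hU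
  have hsU : star U = Uᵀ := by
    ext i j; simp [Matrix.star_apply]
  have hUU : U * Uᵀ = 1 := by
    rw [← hsU]; exact (Matrix.mem_unitaryGroup_iff).mp hM.eigenvectorUnitary.2
  set y := x ᵥ* U with hy
  have hyy : Uᵀ *ᵥ x = y := by rw [Matrix.mulVec_transpose]
  refine ⟨y, ?_, ?_⟩
  · have hspec := hM.spectral_theorem
    simp only [Unitary.conjStarAlgAut_apply, Unitary.coe_star] at hspec
    rw [hsU] at hspec
    conv_lhs => rw [hspec, ← hU, ← Matrix.mulVec_mulVec, ← Matrix.mulVec_mulVec,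
      Matrix.dotProduct_mulVec (A := U), hyy, ← hy]
    simp only [RCLike.ofReal_real_eq_id, Function.comp_id]
    rw [dotProduct, Finset.sum_congr rfl]
    intro i _
    rw [Matrix.mulVec_diagonal]
    simp; ring
  · have key : y ⬝ᵥ y = x ⬝ᵥ x := by
      calc y ⬝ᵥ y = x ᵥ* U ⬝ᵥ (Uᵀ *ᵥ x) := by rw [hyy]
        _ = x ⬝ᵥ U *ᵥ (Uᵀ *ᵥ x) := (Matrix.dotProduct_mulVec x U _).symm
        _ = x ⬝ᵥ x := by rw [Matrix.mulVec_mulVec, hUU, Matrix.one_mulVec]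
    rw [← key, dotProduct, Finset.sum_congr rfl]
    intro i _
    ring

lemma eig_le_qmax {m : ℕ} {M : Matrix (Fin m) (Fin m) ℝ} (hM : M.IsHermitian) (i : Fin m) :
    hM.eigenvalues i ≤ qmax M := by
  apply le_csSup
  · rw [hM.spectrum_real_eq_range_eigenvalues]
    exact (Set.finite_range _).bddAbove
  · exact hM.eigenvalues_mem_spectrum_real i

lemma qmin_le_eig {m : ℕ} {M : Matrix (Fin m) (Fin m) ℝ} (hM : M.IsHermitian) (i : Fin m) :
    qmin M ≤ hM.eigenvalues i := by
  apply csInf_le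
  · rw [hM.spectrum_real_eq_range_eigenvalues]
    exact (Set.finite_range _).bddBelow
  · exact hM.eigenvalues_mem_spectrum_real i

open Matrix in
lemma dot_le_qmax {m : ℕ} {M : Matrix (Fin m) (Fin m) ℝ} (hM : M.IsHermitian) (x : Fin m → ℝ) :
    x ⬝ᵥ (M *ᵥ x) ≤ qmax M * (x ⬝ᵥ x) := by
  obtain ⟨y, h1, h2⟩ := dot_spectral hM x
  rw [h1, h2, Finset.mul_sum]
  exact Finset.sum_le_sum fun i _ => mul_le_mul_of_nonneg_right (eig_le_qmax hM i) (sq_nonneg _)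

open Matrix in
lemma qmin_le_dot {m : ℕ} {M : Matrix (Fin m) (Fin m) ℝ} (hM : M.IsHermitian) (x : Fin m → ℝ) :
    qmin M * (x ⬝ᵥ x) ≤ x ⬝ᵥ (M *ᵥ x) := by
  obtain ⟨y, h1, h2⟩ := dot_spectral hM x
  rw [h1, h2, Finset.mul_sum]
  exact Finset.sum_le_sum fun i _ => mul_le_mul_of_nonneg_right (qmin_le_eig hM i) (sq_nonneg _)

lemma SL_isHermitian {m : ℕ} (E : Finset (Finset (Fin m))) :
    (signlessLap E).IsHermitian := by
  rw [Matrix.IsHermitian]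
  ext i j
  simp only [Matrix.conjTranspose_apply, Matrix.star_apply, star_trivial]
  by_cases h : i = j
  · subst h; rfl
  · simp only [signlessLap, adjMat, Matrix.add_apply, Matrix.diagonal_apply,
      Matrix.of_apply, if_neg h, if_neg (Ne.symm h)]
    congr 1
    unfold edgesBetween
    congr 1
    ext e
    simp [and_comm]

open Matrix in
lemma SL_one_le_spread {m k : ℕ} (E : Finset (Finset (Fin m))) (hk : 2 ≤ k)
    (hu : IsUniform k E) (hne : E.Nonempty) :
    1 ≤ qmax (signlessLap E) - qmin (signlessLap E) := by
  classical
  obtain ⟨e, he⟩ := hne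
  have hcard : e.card = k := hu e he
  have hk1 : (1:ℝ) ≤ (k:ℝ) - 1 := by
    have : (2:ℝ) ≤ k := by exact_mod_cast hk
    linarith
  have hk1' : (k:ℝ) - 1 ≠ 0 := by linarith
  have hQ := SL_isHermitian E
  set Q := signlessLap E with hQdef
  have hQdiag : ∀ i, Q i i = (hdeg E i : ℝ) := by
    intro i; simp [hQdef, signlessLap, adjMat, Matrix.diagonal_apply]
  obtain ⟨j₀, hj₀e, hj₀min⟩ := Finset.exists_min_image e (fun i => hdeg E i)
    (Finset.card_pos.mp (by omega))
  have h1 : qmin Q ≤ (hdeg E j₀ : ℝ) := by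
    have hb := qmin_le_dot hQ (Pi.single j₀ 1)
    have hx1 : (Pi.single j₀ 1 : Fin m → ℝ) ⬝ᵥ (Pi.single j₀ 1) = 1 := by
      simp [dotProduct, Pi.single_apply]
    have hz : (Pi.single j₀ 1 : Fin m → ℝ) ⬝ᵥ (Q *ᵥ Pi.single j₀ 1) = Q j₀ j₀ := by
      simp [dotProduct, Matrix.mulVec, Pi.single_apply, mul_ite, ite_mul,
        Finset.sum_ite_eq, Finset.sum_ite_eq']
    rw [hx1, hz, mul_one, hQdiag] at hb
    exact hb
  set x : Fin m → ℝ := fun i => if i ∈ e then 1 else 0 with hx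
  have hxx : x ⬝ᵥ x = (k:ℝ) := by
    have hterm : ∀ i, x i * x i = if i ∈ e then (1:ℝ) else 0 := by
      intro i; by_cases h : i ∈ e <;> simp [hx, h]
    rw [dotProduct, Finset.sum_congr rfl (fun i _ => hterm i),
      Finset.sum_ite_mem, Finset.univ_inter, Finset.sum_const, hcard, nsmul_eq_mul, mul_one]
  have hrow : ∀ i, (Q *ᵥ x) i = ∑ j ∈ e, Q i j := by
    intro i
    rw [Matrix.mulVec, dotProduct]
    simp only [hx, mul_ite, mul_one, mul_zero]
    rw [Finset.sum_ite_mem, Finset.univ_inter]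
  have hQx : x ⬝ᵥ (Q *ᵥ x) = ∑ i ∈ e, ∑ j ∈ e, Q i j := by
    calc x ⬝ᵥ (Q *ᵥ x) = ∑ i, x i * (Q *ᵥ x) i := rfl
      _ = ∑ i ∈ e, (Q *ᵥ x) i := by
          simp only [hx, ite_mul, one_mul, zero_mul]
          rw [Finset.sum_ite_mem, Finset.univ_inter]
      _ = ∑ i ∈ e, ∑ j ∈ e, Q i j := Finset.sum_congr rfl (fun i _ => hrow i)
  have hoff : ∀ i ∈ e, ∀ j ∈ e, j ≠ i → 1/((k:ℝ)-1) ≤ Q i j := by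
    intro i hi j hj hne'
    have hij : ¬ (i = j) := fun h => hne' h.symm
    have hQij : Q i j = ∑ f ∈ edgesBetween E i j, 1/((f.card:ℝ)-1) := by
      simp [hQdef, signlessLap, adjMat, Matrix.diagonal_apply, hij]
    rw [hQij]
    have hmem : e ∈ edgesBetween E i j := Finset.mem_filter.mpr ⟨he, hi, hj⟩
    have hnn : ∀ f ∈ edgesBetween E i j, 0 ≤ 1/((f.card:ℝ)-1) := by
      intro f hf
      have hfE : f ∈ E := (Finset.mem_filter.mp hf).1
      have : f.card = k := hu f hfE
      rw [this]
      exact div_nonneg zero_le_one (by linarith)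
    have := Finset.single_le_sum hnn hmem
    rwa [hcard] at this
  have hrowb : ∀ i ∈ e, (hdeg E j₀ : ℝ) + 1 ≤ ∑ j ∈ e, Q i j := by
    intro i hi
    rw [← Finset.add_sum_erase _ _ hi]
    have t1 : (hdeg E j₀ : ℝ) ≤ Q i i := by
      rw [hQdiag]; exact_mod_cast hj₀min i hi
    have t2 : (1:ℝ) ≤ ∑ j ∈ e.erase i, Q i j := by
      have hb : ∀ j ∈ e.erase i, 1/((k:ℝ)-1) ≤ Q i j := fun j hj =>
        hoff i hi j (Finset.mem_of_mem_erase hj) (Finset.ne_of_mem_erase hj)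
      have hs := Finset.card_nsmul_le_sum (e.erase i) _ _ hb
      rw [Finset.card_erase_of_mem hi, hcard] at hs
      have hcast : ((k-1 : ℕ) : ℝ) = (k:ℝ) - 1 := by
        rw [Nat.cast_sub (by omega)]; norm_num
      rw [nsmul_eq_mul, hcast] at hs
      calc (1:ℝ) = ((k:ℝ)-1) * (1/((k:ℝ)-1)) := by field_simp
        _ ≤ ∑ j ∈ e.erase i, Q i j := hs
    linarith
  have hsum : (k:ℝ) * ((hdeg E j₀ : ℝ) + 1) ≤ x ⬝ᵥ (Q *ᵥ x) := by
    rw [hQx]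
    calc (k:ℝ) * ((hdeg E j₀ : ℝ) + 1) = ∑ _i ∈ e, ((hdeg E j₀ : ℝ) + 1) := by
          rw [Finset.sum_const, hcard, nsmul_eq_mul]
      _ ≤ ∑ i ∈ e, ∑ j ∈ e, Q i j := Finset.sum_le_sum hrowb
  have hup := dot_le_qmax hQ x
  rw [hxx] at hup
  have hkpos : (0:ℝ) < k := by
    have : (2:ℝ) ≤ k := by exact_mod_cast hk
    linarith
  have h2 : (hdeg E j₀ : ℝ) + 1 ≤ qmax Q := by
    have hch := le_trans hsum hup
    nlinarith
  linarith

lemma SL_mem_S (n : ℕ) (hn : 2 ≤ n) :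
    (1 + 1/(n:ℝ)) ∈ {s : ℝ | ∃ (m : ℕ) (k : ℕ) (E : Finset (Finset (Fin m))),
        2 ≤ m ∧ 2 ≤ k ∧ IsUniform k E ∧ Conn E ∧ E.Nonempty ∧
        s = qmax (signlessLap E) - qmin (signlessLap E)} := by
  refine ⟨n+1, n+1, {Finset.univ}, by omega, by omega, ?_, ?_,
    ⟨Finset.univ, Finset.mem_singleton_self _⟩, ?_⟩
  · intro f hf
    rw [Finset.mem_singleton.mp hf]
    simp
  · intro i j
    by_cases h : i = j
    · subst h; exact Relation.ReflTransGen.refl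
    · exact Relation.ReflTransGen.single
        ⟨h, Finset.univ, Finset.mem_singleton_self _, Finset.mem_univ i, Finset.mem_univ j⟩
  · exact (SL_spread n (by omega)).symm

theorem stmt_14 (n₁ : ℕ) (hn : 2 ≤ n₁) :
    spectrum ℝ (signlessLap ({Finset.univ} : Finset (Finset (Fin (n₁ + 1)))))
        = {(2 : ℝ), 1 - 1 / (n₁ : ℝ)} ∧
    (Matrix.charpoly
        (signlessLap ({Finset.univ} : Finset (Finset (Fin (n₁ + 1)))))).rootMultiplicity
        (2 : ℝ) = 1 ∧
    (Matrix.charpoly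
        (signlessLap ({Finset.univ} : Finset (Finset (Fin (n₁ + 1)))))).rootMultiplicity
        (1 - 1 / (n₁ : ℝ)) = n₁ ∧
    qmax (signlessLap ({Finset.univ} : Finset (Finset (Fin (n₁ + 1)))))
        - qmin (signlessLap ({Finset.univ} : Finset (Finset (Fin (n₁ + 1)))))
      = 1 + 1 / (n₁ : ℝ) ∧
    sInf {s : ℝ | ∃ (m : ℕ) (k : ℕ) (E : Finset (Finset (Fin m))),
        2 ≤ m ∧ 2 ≤ k ∧ IsUniform k E ∧ Conn E ∧ E.Nonempty ∧
        s = qmax (signlessLap E) - qmin (signlessLap E)} = 1 := by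
  have hn1 : 1 ≤ n₁ := by omega
  refine ⟨SL_spectrum n₁ hn1, SL_rm2 n₁ hn1, SL_rmc n₁ hn1, SL_spread n₁ hn1, ?_⟩
  set S := {s : ℝ | ∃ (m : ℕ) (k : ℕ) (E : Finset (Finset (Fin m))),
        2 ≤ m ∧ 2 ≤ k ∧ IsUniform k E ∧ Conn E ∧ E.Nonempty ∧
        s = qmax (signlessLap E) - qmin (signlessLap E)} with hS
  have hlb : ∀ s ∈ S, (1:ℝ) ≤ s := by
    rintro s ⟨m, k, E, hm, hk, hu, hc, hne, rfl⟩
    exact SL_one_le_spread E hk hu hne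
  have hSne : S.Nonempty := ⟨_, SL_mem_S 2 le_rfl⟩
  apply le_antisymm
  · rw [le_iff_forall_pos_le_add]
    intro ε hε
    obtain ⟨n, hn'⟩ := exists_nat_gt (1/ε)
    set N := max n 2 with hN
    have hN2 : 2 ≤ N := le_max_right _ _
    have hNpos : (0:ℝ) < N := by
      have : (2:ℝ) ≤ N := by exact_mod_cast hN2
      linarith
    have hnN : (n:ℝ) ≤ N := by exact_mod_cast le_max_left _ _
    have h1 : 1 < (N:ℝ) * ε := by
      have := (div_lt_iff₀ hε).mp (lt_of_lt_of_le hn' hnN)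
      linarith
    have h2 : 1/(N:ℝ) ≤ ε := by
      rw [div_le_iff₀ hNpos]
      linarith [mul_comm ε (N:ℝ)]
    calc sInf S ≤ 1 + 1/(N:ℝ) := csInf_le ⟨1, hlb⟩ (SL_mem_S N hN2)
      _ ≤ 1 + ε := by linarith
  · exact le_csInf hSne hlb
end
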